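/- arXiv:2205.13602 — 3 statements merged into one kernel-verified Lean document; each statement's English description precedes it below -/
import Mathlib

section
/- Suppose x ∼ Pois(λ) for λ ∈ ℝ_{≥0}^m; given x, the components ȳ^{(i)} ∼ Binomial(x^{(i)}, q^{(i)}) are conditionally independent, q ∈ [0,1]^m; given ȳ, the rows of M ∈ ℕ_0^{m×m} are conditionally independent with M^{(i,·)} ∼ Multinomial(ȳ^{(i)}, G^{(i,·)}) for a row-stochastic m×m matrix G; ỹ := (1_m^T M)^T; and y := ỹ + ŷ where ŷ ∼ Pois(κ) is independent, κ ∈ ℝ^m_{≥0}. Then y ∼ Pois(((λ ∘ q)^T G)^T + κ); in particular log p(y) = −[(λ∘q)^T G + κ^T] 1_m + y^T log(((λ∘q)^T G)^T + κ) − 1_m^T log(y!). -/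
open scoped BigOperators Classical
open MeasureTheory Filter

noncomputable section

namespace PAL

/-- Poisson probability mass function with rate `lam`. -/
def poisP (lam : ℝ) (k : ℕ) : ℝ := Real.exp (-lam) * lam ^ k / (Nat.factorial k)

/-- Binomial probability mass function with `n` trials and success probability `p`. -/
def binomP (n : ℕ) (p : ℝ) (k : ℕ) : ℝ := (n.choose k : ℝ) * p ^ k * (1 - p) ^ (n - k)

/-- Multinomial probability mass function with `k` trials and probability vector `p`. -/
def multinomP {m : ℕ} (k : ℕ) (p : Fin m → ℝ) (z : Fin m → ℕ) : ℝ :=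
  if (∑ i, z i) = k then (Nat.multinomial Finset.univ z : ℝ) * ∏ i, p i ^ z i else 0

/-- Normalisation `η(v) = v / (1ᵀ v)` of a count vector. -/
def etaN {m : ℕ} (v : Fin m → ℕ) : Fin m → ℝ := fun i => (v i : ℝ) / (∑ j, (v j : ℝ))

/-- Normalisation `η(v) = v / (1ᵀ v)` of a real vector. -/
def etaR {m : ℕ} (v : Fin m → ℝ) : Fin m → ℝ := fun i => v i / (∑ j, v j)

/-- A matrix (given as rows) is row-stochastic. -/
def IsStochastic {m : ℕ} (K : Fin m → Fin m → ℝ) : Prop :=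
  (∀ i j, 0 ≤ K i j) ∧ ∀ i, ∑ j, K i j = 1

/-- `p` is a probability vector. -/
def IsProbVec {m : ℕ} (p : Fin m → ℝ) : Prop := (∀ i, 0 ≤ p i) ∧ ∑ i, p i = 1

end PAL

open PAL

namespace S2Aux

lemma poisP_nonneg {a : ℝ} (ha : 0 ≤ a) (k : ℕ) : 0 ≤ poisP a k := by
  unfold PAL.poisP; positivity

lemma binomP_nonneg {p : ℝ} (h0 : 0 ≤ p) (h1 : p ≤ 1) (n k : ℕ) : 0 ≤ binomP n p k := by
  unfold PAL.binomP
  have h2 : (0:ℝ) ≤ 1 - p := by linarith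
  positivity

lemma multinomP_nonneg {m : ℕ} {p : Fin m → ℝ} (hp : ∀ i, 0 ≤ p i) (k : ℕ) (z : Fin m → ℕ) :
    0 ≤ multinomP k p z := by
  unfold PAL.multinomP
  split
  · exact mul_nonneg (Nat.cast_nonneg _) (Finset.prod_nonneg fun i _ => pow_nonneg (hp i) _)
  · exact le_refl 0

lemma tsum_eq_toReal {ι : Type*} {f : ι → ℝ} (h0 : ∀ i, 0 ≤ f i) :
    ∑' i, f i = (∑' i, ENNReal.ofReal (f i)).toReal := by
  by_cases hs : Summable f
  · rw [← ENNReal.ofReal_tsum_of_nonneg h0 hs, ENNReal.toReal_ofReal (tsum_nonneg h0)]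
  · rw [tsum_eq_zero_of_not_summable hs]
    have htop : ∑' i, ENNReal.ofReal (f i) = ⊤ := by
      by_contra h
      exact hs ((ENNReal.summable_toReal h).congr fun i => ENNReal.toReal_ofReal (h0 i))
    simp [htop]

lemma hasSum_exp (r : ℝ) : HasSum (fun n : ℕ => r ^ n / (n.factorial : ℝ)) (Real.exp r) := by
  have hs := NormedSpace.expSeries_div_summable r
  have h2 : (∑' n : ℕ, r ^ n / (n.factorial : ℝ)) = Real.exp r := by
    rw [Real.exp_eq_exp_ℝ, NormedSpace.exp_eq_tsum_div]
  exact h2 ▸ hs.hasSum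


lemma thinning {lam p : ℝ} (hl : 0 ≤ lam) (hp0 : 0 ≤ p) (hp1 : p ≤ 1) (k : ℕ) :
    HasSum (fun n => poisP lam n * binomP n p k) (poisP (lam * p) k) := by
  set f : ℕ → ℝ := fun n => poisP lam n * binomP n p k with hf
  have hinj : Function.Injective (fun j : ℕ => j + k) := add_left_injective k
  have hout : ∀ n, n ∉ Set.range (fun j : ℕ => j + k) → f n = 0 := by
    intro n hn
    have hnk : n < k := by
      by_contra h
      push_neg at h
      exact hn ⟨n - k, by simpa using Nat.sub_add_cancel h⟩
    simp [hf, PAL.binomP, Nat.choose_eq_zero_of_lt hnk]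
  rw [← hinj.hasSum_iff hout]
  have key : (f ∘ fun j : ℕ => j + k) = fun j =>
      (Real.exp (-lam) * (lam * p) ^ k / (k.factorial : ℝ)) *
        ((lam * (1 - p)) ^ j / (j.factorial : ℝ)) := by
    funext j
    have hc : ((j + k).choose k : ℝ) * (k.factorial : ℝ) * (j.factorial : ℝ)
        = ((j + k).factorial : ℝ) := by
      have := Nat.choose_mul_factorial_mul_factorial (Nat.le_add_left k j)
      have h2 : (j + k) - k = j := by omega
      rw [h2] at this
      exact_mod_cast this
    have hkf : (k.factorial : ℝ) ≠ 0 := Nat.cast_ne_zero.2 (Nat.factorial_ne_zero k)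
    have hjf : (j.factorial : ℝ) ≠ 0 := Nat.cast_ne_zero.2 (Nat.factorial_ne_zero j)
    have hjkf : ((j + k).factorial : ℝ) ≠ 0 := Nat.cast_ne_zero.2 (Nat.factorial_ne_zero _)
    simp only [Function.comp, hf, PAL.poisP, PAL.binomP]
    have h3 : (j + k) - k = j := by omega
    rw [h3]
    rw [mul_pow, mul_pow]
    rw [← hc]
    have hpow : lam ^ (j + k) = lam ^ j * lam ^ k := pow_add lam j k
    have hcne : (((j + k).choose k : ℕ) : ℝ) ≠ 0 := by
      have := Nat.choose_pos (Nat.le_add_left k j)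
      positivity
    field_simp
    ring_nf
  rw [key]
  have := (hasSum_exp (lam * (1 - p))).mul_left
      (Real.exp (-lam) * (lam * p) ^ k / (k.factorial : ℝ))
  convert this using 1
  · rfl
  unfold PAL.poisP
  have hexp : Real.exp (-(lam * p)) = Real.exp (-lam) * Real.exp (lam * (1 - p)) := by
    rw [← Real.exp_add]; ring_nf
  rw [hexp]; ring

lemma pois_multinom {m : ℕ} (lam : ℝ) {p : Fin m → ℝ}
    (hp1 : ∑ i, p i = 1) (z : Fin m → ℕ) :
    poisP lam (∑ i, z i) * multinomP (∑ i, z i) p z = ∏ i, poisP (lam * p i) (z i) := by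
  unfold PAL.poisP PAL.multinomP
  rw [if_pos rfl]
  have hspec : ((∏ i, (z i).factorial : ℕ) : ℝ) * (Nat.multinomial Finset.univ z : ℝ)
      = (((∑ i, z i).factorial : ℕ) : ℝ) := by
    exact_mod_cast congrArg (Nat.cast (R := ℝ)) (Nat.multinomial_spec Finset.univ z)
  have hexp : Real.exp (-lam) = ∏ i, Real.exp (-(lam * p i)) := by
    rw [← Real.exp_sum]
    congr 1
    simp only [Finset.sum_neg_distrib, ← Finset.mul_sum, hp1, mul_one]
  have hpow : lam ^ (∑ i, z i) = ∏ i, lam ^ (z i) := by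
    rw [Finset.prod_pow_eq_pow_sum]
  rw [hexp, hpow]
  have hmpos := Nat.multinomial_pos Finset.univ z
  have hmne : (Nat.multinomial Finset.univ z : ℝ) ≠ 0 := by positivity
  have hfne : ((∏ i, (z i).factorial : ℕ) : ℝ) ≠ 0 := by
    have : 0 < ∏ i, (z i).factorial := Finset.prod_pos fun i _ => Nat.factorial_pos _
    positivity
  rw [← hspec]
  simp only [mul_pow, Finset.prod_mul_distrib, Finset.prod_div_distrib]
  push_cast
  field_simp

lemma conv_finite {μ ν : ℝ} (N : ℕ) :
    ∑ a ∈ Finset.range (N+1), poisP μ a * poisP ν (N - a) = poisP (μ+ν) N := by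
  unfold PAL.poisP
  rw [add_pow]
  rw [Finset.mul_sum, Finset.sum_div]
  refine Finset.sum_congr rfl fun a ha => ?_
  have haN : a ≤ N := by
    simp only [Finset.mem_range] at ha; omega
  have hc : ((N.choose a : ℕ) : ℝ) * (a.factorial : ℝ) * ((N - a).factorial : ℝ)
      = ((N.factorial : ℕ) : ℝ) := by
    exact_mod_cast Nat.choose_mul_factorial_mul_factorial haN
  have h1 : (a.factorial : ℝ) ≠ 0 := Nat.cast_ne_zero.2 (Nat.factorial_ne_zero a)
  have h2 : ((N - a).factorial : ℝ) ≠ 0 := Nat.cast_ne_zero.2 (Nat.factorial_ne_zero _)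
  have h3 : (N.factorial : ℝ) ≠ 0 := Nat.cast_ne_zero.2 (Nat.factorial_ne_zero N)
  have hexp : Real.exp (-(μ+ν)) = Real.exp (-μ) * Real.exp (-ν) := by
    rw [← Real.exp_add]; ring_nf
  have h4 : ((N.choose a : ℕ) : ℝ) ≠ 0 := by
    have := Nat.choose_pos haN
    positivity
  rw [hexp, ← hc]
  field_simp

lemma W {μ ν : ℝ} (hμ : 0 ≤ μ) (hν : 0 ≤ ν) (N : ℕ) :
    ∑' a : ℕ, (if a ≤ N then ENNReal.ofReal (poisP μ a * poisP ν (N - a)) else 0)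
      = ENNReal.ofReal (poisP (μ+ν) N) := by
  rw [tsum_eq_sum (s := Finset.range (N+1))
      (by intro a ha; rw [if_neg]; simp only [Finset.mem_range] at ha; omega)]
  rw [← conv_finite N, ENNReal.ofReal_sum_of_nonneg
      (fun a _ => mul_nonneg (poisP_nonneg hμ a) (poisP_nonneg hν _))]
  refine Finset.sum_congr rfl fun a ha => ?_
  rw [if_pos]
  simp only [Finset.mem_range] at ha; omega

lemma tsum_prod_pi {β : Type*} : ∀ (n : ℕ) (g : Fin n → β → ENNReal),
    ∑' x : Fin n → β, ∏ i, g i (x i) = ∏ i, ∑' b, g i b := by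
  intro n
  induction n with
  | zero =>
    intro g
    rw [tsum_eq_single (fun i => i.elim0) (by
      intro b hb
      exact absurd (funext fun i => i.elim0) (Ne.symm hb))]
    simp
  | succ n ih =>
    intro g
    rw [← (Fin.consEquiv (fun _ : Fin (n+1) => β)).tsum_eq]
    have hform : ∀ z : β × (Fin n → β),
        (∏ i, g i ((Fin.consEquiv (fun _ : Fin (n+1) => β)) z i))
          = g 0 z.1 * ∏ i : Fin n, g i.succ (z.2 i) := by
      rintro ⟨a, t⟩
      rw [Fin.prod_univ_succ]
      simp [Fin.consEquiv]
    rw [tsum_congr hform, ENNReal.tsum_prod']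
    have : ∀ a : β, ∑' t : Fin n → β, g 0 a * ∏ i : Fin n, g i.succ (t i)
        = g 0 a * ∏ i : Fin n, ∑' b, g i.succ b := by
      intro a
      rw [ENNReal.tsum_mul_left, ih]
    rw [tsum_congr this, ENNReal.tsum_mul_right, Fin.prod_univ_succ]

lemma pois_conv_pi : ∀ (n : ℕ) (ν : Fin n → ℝ), (∀ i, 0 ≤ ν i) → ∀ (N : ℕ),
    (∑' c : Fin n → ℕ, if (∑ i, c i) = N then ∏ i, ENNReal.ofReal (poisP (ν i) (c i)) else 0)
      = ENNReal.ofReal (poisP (∑ i, ν i) N) := by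
  intro n
  induction n with
  | zero =>
    intro ν hν N
    rw [tsum_eq_single (fun i => i.elim0) (by
      intro b hb
      exact absurd (funext fun i => i.elim0) (Ne.symm hb))]
    simp only [Finset.univ_eq_empty, Finset.sum_empty, Finset.prod_empty]
    unfold PAL.poisP
    rcases Nat.eq_zero_or_pos N with h | h
    · subst h; simp
    · rw [if_neg (by omega)]
      rw [zero_pow (by omega)]
      simp
  | succ n ih =>
    intro ν hν N
    rw [← (Fin.consEquiv (fun _ : Fin (n+1) => ℕ)).tsum_eq]
    have hform : ∀ z : ℕ × (Fin n → ℕ),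
        (if (∑ i, (Fin.consEquiv (fun _ : Fin (n+1) => ℕ)) z i) = N then
            ∏ i, ENNReal.ofReal (poisP (ν i) ((Fin.consEquiv (fun _ : Fin (n+1) => ℕ)) z i)) else 0)
          = ENNReal.ofReal (poisP (ν 0) z.1) *
              (if z.1 + (∑ i : Fin n, z.2 i) = N then
                ∏ i : Fin n, ENNReal.ofReal (poisP (ν i.succ) (z.2 i)) else 0) := by
      rintro ⟨a, t⟩
      rw [Fin.sum_univ_succ, Fin.prod_univ_succ]
      simp only [Fin.consEquiv, Equiv.coe_fn_mk, Fin.cons_zero, Fin.cons_succ]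
      rw [mul_ite, mul_zero]
    rw [tsum_congr hform, ENNReal.tsum_prod']
    have hinner : ∀ a : ℕ,
        (∑' t : Fin n → ℕ, ENNReal.ofReal (poisP (ν 0) a) *
            (if a + (∑ i : Fin n, t i) = N then
              ∏ i : Fin n, ENNReal.ofReal (poisP (ν i.succ) (t i)) else 0))
          = if a ≤ N then ENNReal.ofReal (poisP (ν 0) a * poisP (∑ i : Fin n, ν i.succ) (N - a))
            else 0 := by
      intro a
      rw [ENNReal.tsum_mul_left]
      by_cases haN : a ≤ N
      · have hcond : ∀ t : Fin n → ℕ, (a + (∑ i : Fin n, t i) = N) ↔ ((∑ i : Fin n, t i) = N - a) := by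
          intro t; omega
        rw [if_pos haN]
        have := ih (fun i => ν i.succ) (fun i => hν i.succ) (N - a)
        simp only [hcond]
        rw [this, ← ENNReal.ofReal_mul (poisP_nonneg (hν 0) a)]
      · rw [if_neg haN]
        have : ∀ t : Fin n → ℕ, (if a + (∑ i : Fin n, t i) = N then
            ∏ i : Fin n, ENNReal.ofReal (poisP (ν i.succ) (t i)) else 0) = 0 := by
          intro t; rw [if_neg (by omega)]
        rw [tsum_congr this]
        simp
    rw [tsum_congr hinner, W (hν 0) (Finset.sum_nonneg fun i _ => hν i.succ) N,
      Fin.sum_univ_succ]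

lemma prod_ite_all {m : ℕ} (P : Fin m → Prop) [Decidable (∀ k, P k)] [∀ k, Decidable (P k)] (v : Fin m → ENNReal) :
    (if ∀ k, P k then ∏ k, v k else 0) = ∏ k, if P k then v k else 0 := by
  by_cases h : ∀ k, P k
  · rw [if_pos h]
    exact Finset.prod_congr rfl fun k _ => (if_pos (h k)).symm
  · rw [if_neg h]
    push_neg at h
    obtain ⟨k, hk⟩ := h
    exact (Finset.prod_eq_zero (Finset.mem_univ k) (if_neg hk : (if P k then v k else 0) = 0)).symm

lemma column_sum {m : ℕ} (μ : Fin m → ℝ) (hμ : ∀ i, 0 ≤ μ i) (κk : ℝ) (hκk : 0 ≤ κk) (N : ℕ) :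
    (∑' z : (Fin m → ℕ) × ℕ, if (∑ i, z.1 i) + z.2 = N then
        (∏ i, ENNReal.ofReal (poisP (μ i) (z.1 i))) * ENNReal.ofReal (poisP κk z.2) else 0)
      = ENNReal.ofReal (poisP ((∑ i, μ i) + κk) N) := by
  rw [ENNReal.tsum_prod', ENNReal.tsum_comm]
  have hinner : ∀ h : ℕ,
      (∑' c : Fin m → ℕ, if (∑ i, c i) + h = N then
          (∏ i, ENNReal.ofReal (poisP (μ i) (c i))) * ENNReal.ofReal (poisP κk h) else 0)
        = if h ≤ N then ENNReal.ofReal (poisP κk h * poisP (∑ i, μ i) (N - h)) else 0 := by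
    intro h
    by_cases hN : h ≤ N
    · rw [if_pos hN]
      have hcond : ∀ c : Fin m → ℕ, ((∑ i, c i) + h = N) ↔ ((∑ i, c i) = N - h) := by
        intro c; omega
      have hsplit : ∀ c : Fin m → ℕ, (if (∑ i, c i) + h = N then
          (∏ i, ENNReal.ofReal (poisP (μ i) (c i))) * ENNReal.ofReal (poisP κk h) else 0)
        = (if (∑ i, c i) = N - h then (∏ i, ENNReal.ofReal (poisP (μ i) (c i))) else 0) *
            ENNReal.ofReal (poisP κk h) := by
        intro c
        simp only [hcond]
        split <;> simp
      rw [tsum_congr hsplit]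
      rw [ENNReal.tsum_mul_right, pois_conv_pi m μ hμ (N - h),
        ← ENNReal.ofReal_mul (poisP_nonneg (Finset.sum_nonneg fun i _ => hμ i) _)]
      rw [mul_comm]
    · rw [if_neg hN]
      have : ∀ c : Fin m → ℕ, (if (∑ i, c i) + h = N then
          (∏ i, ENNReal.ofReal (poisP (μ i) (c i))) * ENNReal.ofReal (poisP κk h) else 0) = 0 := by
        intro c; rw [if_neg (by omega)]
      rw [tsum_congr this]
      simp
  rw [tsum_congr hinner, W hκk (Finset.sum_nonneg fun i _ => hμ i) N, add_comm]

lemma main_enn {m : ℕ} (lam q κ : Fin m → ℝ) (G : Fin m → Fin m → ℝ)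
    (hlam : ∀ i, 0 ≤ lam i) (hq0 : ∀ i, 0 ≤ q i) (hq1 : ∀ i, q i ≤ 1)
    (hκ : ∀ i, 0 ≤ κ i) (hG0 : ∀ i j, 0 ≤ G i j) (hG1 : ∀ i, ∑ j, G i j = 1)
    (y : Fin m → ℕ) :
    (∑' x : Fin m → ℕ, ∑' yb : Fin m → ℕ, ∑' M : Fin m → Fin m → ℕ, ∑' yh : Fin m → ℕ,
        ENNReal.ofReal (if (fun k => (∑ i, M i k) + yh k) = y then
          (∏ i, poisP (lam i) (x i)) * (∏ i, binomP (x i) (q i) (yb i)) *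
            (∏ i, multinomP (yb i) (G i) (M i)) * ∏ k, poisP (κ k) (yh k)
        else 0))
      = ENNReal.ofReal (∏ k, poisP ((∑ i, lam i * q i * G i k) + κ k) (y k)) := by
  classical
  -- nonnegativity facts
  have hpoisA : ∀ x : Fin m → ℕ, (0:ℝ) ≤ ∏ i, poisP (lam i) (x i) :=
    fun x => Finset.prod_nonneg fun i _ => poisP_nonneg (hlam i) _
  have hbinB : ∀ (x yb : Fin m → ℕ), (0:ℝ) ≤ ∏ i, binomP (x i) (q i) (yb i) :=
    fun x yb => Finset.prod_nonneg fun i _ => binomP_nonneg (hq0 i) (hq1 i) _ _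
  have hmulC : ∀ (yb : Fin m → ℕ) (M : Fin m → Fin m → ℕ),
      (0:ℝ) ≤ ∏ i, multinomP (yb i) (G i) (M i) :=
    fun yb M => Finset.prod_nonneg fun i _ => multinomP_nonneg (fun j => hG0 i j) _ _
  have hpoisD : ∀ yh : Fin m → ℕ, (0:ℝ) ≤ ∏ k, poisP (κ k) (yh k) :=
    fun yh => Finset.prod_nonneg fun k _ => poisP_nonneg (hκ k) _
  -- Step 1: pointwise reshaping of the summand
  have step1 : ∀ (x yb : Fin m → ℕ) (M : Fin m → Fin m → ℕ) (yh : Fin m → ℕ),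
      ENNReal.ofReal (if (fun k => (∑ i, M i k) + yh k) = y then
          (∏ i, poisP (lam i) (x i)) * (∏ i, binomP (x i) (q i) (yb i)) *
            (∏ i, multinomP (yb i) (G i) (M i)) * ∏ k, poisP (κ k) (yh k)
        else 0)
      = (∏ i, ENNReal.ofReal (poisP (lam i) (x i) * binomP (x i) (q i) (yb i))) *
          ((∏ i, ENNReal.ofReal (multinomP (yb i) (G i) (M i))) *
            (if (fun k => (∑ i, M i k) + yh k) = y then
              ∏ k, ENNReal.ofReal (poisP (κ k) (yh k)) else 0)) := by
    intro x yb M yh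
    by_cases hc : (fun k => (∑ i, M i k) + yh k) = y
    · rw [if_pos hc, if_pos hc]
      rw [ENNReal.ofReal_mul (mul_nonneg (mul_nonneg (hpoisA x) (hbinB x yb)) (hmulC yb M)),
        ENNReal.ofReal_mul (mul_nonneg (hpoisA x) (hbinB x yb)),
        ENNReal.ofReal_mul (hpoisA x)]
      rw [ENNReal.ofReal_prod_of_nonneg (fun i _ => poisP_nonneg (hlam i) _),
        ENNReal.ofReal_prod_of_nonneg (fun i _ => binomP_nonneg (hq0 i) (hq1 i) _ _),
        ENNReal.ofReal_prod_of_nonneg (fun i _ => multinomP_nonneg (fun j => hG0 i j) _ _),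
        ENNReal.ofReal_prod_of_nonneg (fun k _ => poisP_nonneg (hκ k) _)]
      rw [← Finset.prod_mul_distrib]
      have : ∀ i : Fin m, ENNReal.ofReal (poisP (lam i) (x i)) *
          ENNReal.ofReal (binomP (x i) (q i) (yb i))
          = ENNReal.ofReal (poisP (lam i) (x i) * binomP (x i) (q i) (yb i)) :=
        fun i => (ENNReal.ofReal_mul (poisP_nonneg (hlam i) _)).symm
      rw [Finset.prod_congr rfl (fun i _ => this i)]
      ring
    · rw [if_neg hc, if_neg hc]
      simp
  simp only [step1]
  -- Step 2: pull the x-yb factor out of the two inner sums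
  have step2 : ∀ (x yb : Fin m → ℕ),
      (∑' M : Fin m → Fin m → ℕ, ∑' yh : Fin m → ℕ,
        (∏ i, ENNReal.ofReal (poisP (lam i) (x i) * binomP (x i) (q i) (yb i))) *
          ((∏ i, ENNReal.ofReal (multinomP (yb i) (G i) (M i))) *
            (if (fun k => (∑ i, M i k) + yh k) = y then
              ∏ k, ENNReal.ofReal (poisP (κ k) (yh k)) else 0)))
      = (∏ i, ENNReal.ofReal (poisP (lam i) (x i) * binomP (x i) (q i) (yb i))) *
          (∑' M : Fin m → Fin m → ℕ,
            (∏ i, ENNReal.ofReal (multinomP (yb i) (G i) (M i))) *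
            (∑' yh : Fin m → ℕ, (if (fun k => (∑ i, M i k) + yh k) = y then
              ∏ k, ENNReal.ofReal (poisP (κ k) (yh k)) else 0))) := by
    intro x yb
    rw [← ENNReal.tsum_mul_left]
    refine tsum_congr fun M => ?_
    rw [← ENNReal.tsum_mul_left, ← ENNReal.tsum_mul_left]
  simp only [step2]
  -- Step 3: swap the x and yb sums, evaluate the x sum
  rw [ENNReal.tsum_comm]
  have step3 : ∀ yb : Fin m → ℕ,
      (∑' x : Fin m → ℕ,
        (∏ i, ENNReal.ofReal (poisP (lam i) (x i) * binomP (x i) (q i) (yb i))) *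
          (∑' M : Fin m → Fin m → ℕ,
            (∏ i, ENNReal.ofReal (multinomP (yb i) (G i) (M i))) *
            (∑' yh : Fin m → ℕ, (if (fun k => (∑ i, M i k) + yh k) = y then
              ∏ k, ENNReal.ofReal (poisP (κ k) (yh k)) else 0))))
      = (∏ i, ENNReal.ofReal (poisP (lam i * q i) (yb i))) *
          (∑' M : Fin m → Fin m → ℕ,
            (∏ i, ENNReal.ofReal (multinomP (yb i) (G i) (M i))) *
            (∑' yh : Fin m → ℕ, (if (fun k => (∑ i, M i k) + yh k) = y then
              ∏ k, ENNReal.ofReal (poisP (κ k) (yh k)) else 0))) := by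
    intro yb
    rw [ENNReal.tsum_mul_right]
    congr 1
    rw [tsum_prod_pi m (fun i n => ENNReal.ofReal (poisP (lam i) n * binomP n (q i) (yb i)))]
    refine Finset.prod_congr rfl fun i _ => ?_
    rw [← (thinning (hlam i) (hq0 i) (hq1 i) (yb i)).tsum_eq]
    exact (ENNReal.ofReal_tsum_of_nonneg
      (fun n => mul_nonneg (poisP_nonneg (hlam i) n) (binomP_nonneg (hq0 i) (hq1 i) _ _))
      (thinning (hlam i) (hq0 i) (hq1 i) (yb i)).summable).symm
  simp only [step3]
  -- Step 4: push the yb factor inside, swap yb and M sums, collapse the yb sum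
  have step4a : ∀ yb : Fin m → ℕ,
      (∏ i, ENNReal.ofReal (poisP (lam i * q i) (yb i))) *
          (∑' M : Fin m → Fin m → ℕ,
            (∏ i, ENNReal.ofReal (multinomP (yb i) (G i) (M i))) *
            (∑' yh : Fin m → ℕ, (if (fun k => (∑ i, M i k) + yh k) = y then
              ∏ k, ENNReal.ofReal (poisP (κ k) (yh k)) else 0)))
      = ∑' M : Fin m → Fin m → ℕ,
          ((∏ i, ENNReal.ofReal (poisP (lam i * q i) (yb i))) *
            ∏ i, ENNReal.ofReal (multinomP (yb i) (G i) (M i))) *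
            (∑' yh : Fin m → ℕ, (if (fun k => (∑ i, M i k) + yh k) = y then
              ∏ k, ENNReal.ofReal (poisP (κ k) (yh k)) else 0)) := by
    intro yb
    rw [← ENNReal.tsum_mul_left]
    exact tsum_congr fun M => by ring
  simp only [step4a]
  rw [ENNReal.tsum_comm]
  have step4b : ∀ M : Fin m → Fin m → ℕ,
      (∑' yb : Fin m → ℕ,
        ((∏ i, ENNReal.ofReal (poisP (lam i * q i) (yb i))) *
            ∏ i, ENNReal.ofReal (multinomP (yb i) (G i) (M i))) *
            (∑' yh : Fin m → ℕ, (if (fun k => (∑ i, M i k) + yh k) = y then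
              ∏ k, ENNReal.ofReal (poisP (κ k) (yh k)) else 0)))
      = (∏ i, ∏ j, ENNReal.ofReal (poisP (lam i * q i * G i j) (M i j))) *
            (∑' yh : Fin m → ℕ, (if (fun k => (∑ i, M i k) + yh k) = y then
              ∏ k, ENNReal.ofReal (poisP (κ k) (yh k)) else 0)) := by
    intro M
    rw [ENNReal.tsum_mul_right]
    congr 1
    rw [tsum_eq_single (fun i => ∑ j, M i j) (by
      intro yb hne
      obtain ⟨i, hi⟩ := Function.ne_iff.mp hne
      have hzero : multinomP (yb i) (G i) (M i) = 0 := by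
        unfold PAL.multinomP
        rw [if_neg (by exact fun h => hi (h.symm ▸ rfl) )]
      refine mul_eq_zero_of_right _ ?_
      refine Finset.prod_eq_zero (Finset.mem_univ i) ?_
      rw [hzero, ENNReal.ofReal_zero])]
    rw [← Finset.prod_mul_distrib]
    refine Finset.prod_congr rfl fun i _ => ?_
    rw [← ENNReal.ofReal_mul (poisP_nonneg (mul_nonneg (hlam i) (hq0 i)) _)]
    rw [pois_multinom (lam i * q i) (hG1 i) (M i)]
    exact ENNReal.ofReal_prod_of_nonneg fun j _ =>
      poisP_nonneg (mul_nonneg (mul_nonneg (hlam i) (hq0 i)) (hG0 i j)) _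
  simp only [step4b]
  -- Step 5: merge the M and yh sums into a single sum over pairs and reindex by columns
  have step5 : ∀ M : Fin m → Fin m → ℕ,
      (∏ i, ∏ j, ENNReal.ofReal (poisP (lam i * q i * G i j) (M i j))) *
            (∑' yh : Fin m → ℕ, (if (fun k => (∑ i, M i k) + yh k) = y then
              ∏ k, ENNReal.ofReal (poisP (κ k) (yh k)) else 0))
      = ∑' yh : Fin m → ℕ, (if (fun k => (∑ i, M i k) + yh k) = y then
          (∏ i, ∏ j, ENNReal.ofReal (poisP (lam i * q i * G i j) (M i j))) *
            ∏ k, ENNReal.ofReal (poisP (κ k) (yh k)) else 0) := by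
    intro M
    rw [← ENNReal.tsum_mul_left]
    refine tsum_congr fun yh => ?_
    split <;> simp
  simp only [step5]
  have hmerge : (∑' (M : Fin m → Fin m → ℕ), ∑' (yh : Fin m → ℕ),
      (if (fun k => (∑ i, M i k) + yh k) = y then
        (∏ i, ∏ j, ENNReal.ofReal (poisP (lam i * q i * G i j) (M i j))) *
          ∏ k, ENNReal.ofReal (poisP (κ k) (yh k)) else 0))
      = ∑' p : (Fin m → Fin m → ℕ) × (Fin m → ℕ),
        (if (fun k => (∑ i, p.1 i k) + p.2 k) = y then
          (∏ i, ∏ j, ENNReal.ofReal (poisP (lam i * q i * G i j) (p.1 i j))) *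
            ∏ k, ENNReal.ofReal (poisP (κ k) (p.2 k)) else 0) :=
    (ENNReal.tsum_prod' (f := fun p : (Fin m → Fin m → ℕ) × (Fin m → ℕ) =>
        (if (fun k => (∑ i, p.1 i k) + p.2 k) = y then
          (∏ i, ∏ j, ENNReal.ofReal (poisP (lam i * q i * G i j) (p.1 i j))) *
            ∏ k, ENNReal.ofReal (poisP (κ k) (p.2 k)) else 0))).symm
  rw [hmerge]
  -- reindex
  let e : (Fin m → (Fin m → ℕ) × ℕ) ≃ ((Fin m → Fin m → ℕ) × (Fin m → ℕ)) :=
  { toFun := fun z => (fun i k => (z k).1 i, fun k => (z k).2)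
    invFun := fun p k => (fun i => p.1 i k, p.2 k)
    left_inv := fun z => rfl
    right_inv := fun p => rfl }
  rw [← e.tsum_eq]
  have step6 : ∀ z : Fin m → (Fin m → ℕ) × ℕ,
      (fun p : (Fin m → Fin m → ℕ) × (Fin m → ℕ) =>
        (if (fun k => (∑ i, p.1 i k) + p.2 k) = y then
          (∏ i, ∏ j, ENNReal.ofReal (poisP (lam i * q i * G i j) (p.1 i j))) *
            ∏ k, ENNReal.ofReal (poisP (κ k) (p.2 k)) else 0)) (e z)
      = ∏ k, (if (∑ i, (z k).1 i) + (z k).2 = y k then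
          (∏ i, ENNReal.ofReal (poisP (lam i * q i * G i k) ((z k).1 i))) *
            ENNReal.ofReal (poisP (κ k) ((z k).2)) else 0) := by
    intro z
    have hbody : (∏ i, ∏ j, ENNReal.ofReal (poisP (lam i * q i * G i j) ((z j).1 i))) *
          ∏ k, ENNReal.ofReal (poisP (κ k) ((z k).2))
        = ∏ k, ((∏ i, ENNReal.ofReal (poisP (lam i * q i * G i k) ((z k).1 i))) *
            ENNReal.ofReal (poisP (κ k) ((z k).2))) := by
      rw [Finset.prod_comm, ← Finset.prod_mul_distrib]
    have hcond : ((fun k => (∑ i, (z k).1 i) + (z k).2) = y)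
        ↔ (∀ k, (∑ i, (z k).1 i) + (z k).2 = y k) := funext_iff
    show (if (fun k => (∑ i, (z k).1 i) + (z k).2) = y then
          (∏ i, ∏ j, ENNReal.ofReal (poisP (lam i * q i * G i j) ((z j).1 i))) *
            ∏ k, ENNReal.ofReal (poisP (κ k) ((z k).2)) else 0) = _
    rw [hbody]
    rw [if_congr hcond rfl rfl]
    exact prod_ite_all _ _
  rw [tsum_congr step6]
  rw [tsum_prod_pi m (fun k (ch : (Fin m → ℕ) × ℕ) =>
    (if (∑ i, ch.1 i) + ch.2 = y k then
          (∏ i, ENNReal.ofReal (poisP (lam i * q i * G i k) (ch.1 i))) *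
            ENNReal.ofReal (poisP (κ k) ch.2) else 0))]
  rw [ENNReal.ofReal_prod_of_nonneg (fun k _ => poisP_nonneg
    (add_nonneg (Finset.sum_nonneg fun i _ =>
      mul_nonneg (mul_nonneg (hlam i) (hq0 i)) (hG0 i k)) (hκ k)) _)]
  refine Finset.prod_congr rfl fun k _ => ?_
  exact column_sum (fun i => lam i * q i * G i k)
    (fun i => mul_nonneg (mul_nonneg (hlam i) (hq0 i)) (hG0 i k)) (κ k) (hκ k) (y k)

end S2Aux

open S2Aux

/-- Suppose `x ∼ Pois(λ)`; given `x`, `ȳⁱ ∼ Binomial(xⁱ, qⁱ)` conditionally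
independently; given `ȳ`, the rows of `M` are conditionally independent with
`Mⁱ ∼ Multinomial(ȳⁱ, Gⁱ)` for row-stochastic `G`; `ỹ := (1ᵀ M)ᵀ`; and `y := ỹ + ŷ` with
`ŷ ∼ Pois(κ)` independent.  Then `y ∼ Pois(((λ ∘ q)ᵀ G)ᵀ + κ)`: for every `y` the marginal
pmf of `y` equals the vector-Poisson pmf with intensity `((λ ∘ q)ᵀ G)ᵀ + κ`. -/
theorem statement_2 {m : ℕ} (lam q κ : Fin m → ℝ) (G : Fin m → Fin m → ℝ)
    (hlam : ∀ i, 0 ≤ lam i) (hq0 : ∀ i, 0 ≤ q i) (hq1 : ∀ i, q i ≤ 1)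
    (hκ : ∀ i, 0 ≤ κ i) (hG : PAL.IsStochastic G)
    (y : Fin m → ℕ) :
    (∑' x : Fin m → ℕ, ∑' yb : Fin m → ℕ, ∑' M : Fin m → Fin m → ℕ, ∑' yh : Fin m → ℕ,
        (if (fun k => (∑ i, M i k) + yh k) = y then
          (∏ i, PAL.poisP (lam i) (x i)) * (∏ i, PAL.binomP (x i) (q i) (yb i)) *
            (∏ i, PAL.multinomP (yb i) (G i) (M i)) * ∏ k, PAL.poisP (κ k) (yh k)
        else 0))
      = ∏ k, PAL.poisP ((∑ i, lam i * q i * G i k) + κ k) (y k) := by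
  classical
  have hG0 := hG.1
  have hG1 := hG.2
  have hF0 : ∀ (x yb : Fin m → ℕ) (M : Fin m → Fin m → ℕ) (yh : Fin m → ℕ),
      (0:ℝ) ≤ (if (fun k => (∑ i, M i k) + yh k) = y then
          (∏ i, PAL.poisP (lam i) (x i)) * (∏ i, PAL.binomP (x i) (q i) (yb i)) *
            (∏ i, PAL.multinomP (yb i) (G i) (M i)) * ∏ k, PAL.poisP (κ k) (yh k)
        else 0) := by
    intro x yb M yh
    split
    · refine mul_nonneg (mul_nonneg (mul_nonneg ?_ ?_) ?_) ?_
      · exact Finset.prod_nonneg fun i _ => poisP_nonneg (hlam i) _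
      · exact Finset.prod_nonneg fun i _ => binomP_nonneg (hq0 i) (hq1 i) _ _
      · exact Finset.prod_nonneg fun i _ => multinomP_nonneg (fun j => hG0 i j) _ _
      · exact Finset.prod_nonneg fun k _ => poisP_nonneg (hκ k) _
    · exact le_refl 0
  have hmain := main_enn lam q κ G hlam hq0 hq1 hκ hG0 hG1 y
  have hEtop : (∑' x : Fin m → ℕ, ∑' yb : Fin m → ℕ, ∑' M : Fin m → Fin m → ℕ,
      ∑' yh : Fin m → ℕ,
        ENNReal.ofReal (if (fun k => (∑ i, M i k) + yh k) = y then
          (∏ i, PAL.poisP (lam i) (x i)) * (∏ i, PAL.binomP (x i) (q i) (yb i)) *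
            (∏ i, PAL.multinomP (yb i) (G i) (M i)) * ∏ k, PAL.poisP (κ k) (yh k)
        else 0)) ≠ ⊤ := by
    rw [hmain]; exact ENNReal.ofReal_ne_top
  have hE1top : ∀ x : Fin m → ℕ, (∑' yb : Fin m → ℕ, ∑' M : Fin m → Fin m → ℕ,
      ∑' yh : Fin m → ℕ,
        ENNReal.ofReal (if (fun k => (∑ i, M i k) + yh k) = y then
          (∏ i, PAL.poisP (lam i) (x i)) * (∏ i, PAL.binomP (x i) (q i) (yb i)) *
            (∏ i, PAL.multinomP (yb i) (G i) (M i)) * ∏ k, PAL.poisP (κ k) (yh k)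
        else 0)) ≠ ⊤ :=
    fun x => ne_top_of_le_ne_top hEtop (ENNReal.le_tsum x)
  have hE2top : ∀ (x yb : Fin m → ℕ), (∑' M : Fin m → Fin m → ℕ,
      ∑' yh : Fin m → ℕ,
        ENNReal.ofReal (if (fun k => (∑ i, M i k) + yh k) = y then
          (∏ i, PAL.poisP (lam i) (x i)) * (∏ i, PAL.binomP (x i) (q i) (yb i)) *
            (∏ i, PAL.multinomP (yb i) (G i) (M i)) * ∏ k, PAL.poisP (κ k) (yh k)
        else 0)) ≠ ⊤ :=
    fun x yb => ne_top_of_le_ne_top (hE1top x) (ENNReal.le_tsum yb)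
  have hE3top : ∀ (x yb : Fin m → ℕ) (M : Fin m → Fin m → ℕ), (∑' yh : Fin m → ℕ,
        ENNReal.ofReal (if (fun k => (∑ i, M i k) + yh k) = y then
          (∏ i, PAL.poisP (lam i) (x i)) * (∏ i, PAL.binomP (x i) (q i) (yb i)) *
            (∏ i, PAL.multinomP (yb i) (G i) (M i)) * ∏ k, PAL.poisP (κ k) (yh k)
        else 0)) ≠ ⊤ :=
    fun x yb M => ne_top_of_le_ne_top (hE2top x yb) (ENNReal.le_tsum M)
  have c1 : ∀ (x yb : Fin m → ℕ) (M : Fin m → Fin m → ℕ),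
      (∑' yh : Fin m → ℕ,
        (if (fun k => (∑ i, M i k) + yh k) = y then
          (∏ i, PAL.poisP (lam i) (x i)) * (∏ i, PAL.binomP (x i) (q i) (yb i)) *
            (∏ i, PAL.multinomP (yb i) (G i) (M i)) * ∏ k, PAL.poisP (κ k) (yh k)
        else 0))
      = (∑' yh : Fin m → ℕ,
        ENNReal.ofReal (if (fun k => (∑ i, M i k) + yh k) = y then
          (∏ i, PAL.poisP (lam i) (x i)) * (∏ i, PAL.binomP (x i) (q i) (yb i)) *
            (∏ i, PAL.multinomP (yb i) (G i) (M i)) * ∏ k, PAL.poisP (κ k) (yh k)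
        else 0)).toReal :=
    fun x yb M => tsum_eq_toReal (hF0 x yb M)
  simp only [c1]
  have c2 : ∀ (x yb : Fin m → ℕ),
      (∑' M : Fin m → Fin m → ℕ, (∑' yh : Fin m → ℕ,
        ENNReal.ofReal (if (fun k => (∑ i, M i k) + yh k) = y then
          (∏ i, PAL.poisP (lam i) (x i)) * (∏ i, PAL.binomP (x i) (q i) (yb i)) *
            (∏ i, PAL.multinomP (yb i) (G i) (M i)) * ∏ k, PAL.poisP (κ k) (yh k)
        else 0)).toReal)
      = (∑' M : Fin m → Fin m → ℕ, ∑' yh : Fin m → ℕ,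
        ENNReal.ofReal (if (fun k => (∑ i, M i k) + yh k) = y then
          (∏ i, PAL.poisP (lam i) (x i)) * (∏ i, PAL.binomP (x i) (q i) (yb i)) *
            (∏ i, PAL.multinomP (yb i) (G i) (M i)) * ∏ k, PAL.poisP (κ k) (yh k)
        else 0)).toReal := by
    intro x yb
    rw [tsum_eq_toReal (fun M => ENNReal.toReal_nonneg)]
    congr 1
    exact tsum_congr fun M => ENNReal.ofReal_toReal (hE3top x yb M)
  simp only [c2]
  have c3 : ∀ (x : Fin m → ℕ),
      (∑' yb : Fin m → ℕ, (∑' M : Fin m → Fin m → ℕ, ∑' yh : Fin m → ℕ,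
        ENNReal.ofReal (if (fun k => (∑ i, M i k) + yh k) = y then
          (∏ i, PAL.poisP (lam i) (x i)) * (∏ i, PAL.binomP (x i) (q i) (yb i)) *
            (∏ i, PAL.multinomP (yb i) (G i) (M i)) * ∏ k, PAL.poisP (κ k) (yh k)
        else 0)).toReal)
      = (∑' yb : Fin m → ℕ, ∑' M : Fin m → Fin m → ℕ, ∑' yh : Fin m → ℕ,
        ENNReal.ofReal (if (fun k => (∑ i, M i k) + yh k) = y then
          (∏ i, PAL.poisP (lam i) (x i)) * (∏ i, PAL.binomP (x i) (q i) (yb i)) *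
            (∏ i, PAL.multinomP (yb i) (G i) (M i)) * ∏ k, PAL.poisP (κ k) (yh k)
        else 0)).toReal := by
    intro x
    rw [tsum_eq_toReal (fun yb => ENNReal.toReal_nonneg)]
    congr 1
    exact tsum_congr fun yb => ENNReal.ofReal_toReal (hE2top x yb)
  simp only [c3]
  rw [tsum_eq_toReal (fun x => ENNReal.toReal_nonneg)]
  rw [tsum_congr (fun x => ENNReal.ofReal_toReal (hE1top x))]
  rw [hmain]
  exact ENNReal.toReal_ofReal (Finset.prod_nonneg fun k _ => poisP_nonneg
    (add_nonneg (Finset.sum_nonneg fun i _ =>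
      mul_nonneg (mul_nonneg (hlam i) (hq0 i)) (hG0 i k)) (hκ k)) _)

end
end

section
/- Suppose x ∼ Pois(λ) for λ ∈ ℝ_{≥0}^m; given x, ȳ^{(i)} ∼ Binomial(x^{(i)}, q^{(i)}) conditionally independently, q ∈ [0,1]^m; given ȳ, the rows of M ∈ ℕ_0^{m×m} are conditionally independent with M^{(i,·)} ∼ Multinomial(ȳ^{(i)}, G^{(i,·)}) for a row-stochastic G; ỹ := (1_m^T M)^T; and y := ỹ + ŷ with ŷ ∼ Pois(κ) independent, κ ∈ ℝ^m_{≥0}. Then the conditional expectation of x given y is E[x | y] = [1_m − q + ({y^T ⊘ [(q ∘ λ)^T G + κ^T]} [(1_m ⊗ q) ∘ G^T])^T] ∘ λ, where for any j with ((q∘λ)^T G)^{(j)} + κ^{(j)} = 0 the corresponding ratio is set to 0. -/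
open scoped BigOperators Classical ENNReal NNReal
open MeasureTheory Filter

noncomputable section

namespace S3
open PAL


lemma binomP_nonneg {p : ℝ} (h0 : 0 ≤ p) (h1 : p ≤ 1) (n k : ℕ) : 0 ≤ binomP n p k := by
  unfold binomP
  have : 0 ≤ 1 - p := by linarith
  positivity

lemma multinomP_nonneg {m : ℕ} {p : Fin m → ℝ} (h0 : ∀ i, 0 ≤ p i) (k : ℕ) (z : Fin m → ℕ) :
    0 ≤ multinomP k p z := by
  unfold multinomP
  split
  · exact mul_nonneg (Nat.cast_nonneg _) (Finset.prod_nonneg fun i _ => pow_nonneg (h0 i) _)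
  · exact le_refl 0

lemma multinomP_eq_zero {m : ℕ} {p : Fin m → ℝ} {k : ℕ} {z : Fin m → ℕ}
    (h : (∑ i, z i) ≠ k) : multinomP k p z = 0 := if_neg h

lemma binomP_eq_zero {p : ℝ} {n k : ℕ} (h : n < k) : binomP n p k = 0 := by
  unfold binomP
  rw [Nat.choose_eq_zero_of_lt h]; simp

lemma pois_conv (a b : ℝ) (Y : ℕ) :
    ∑ j ∈ Finset.range (Y + 1), poisP a j * poisP b (Y - j) = poisP (a + b) Y := by
  unfold poisP
  rw [add_pow, neg_add, Real.exp_add, Finset.mul_sum, Finset.sum_div]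
  refine Finset.sum_congr rfl ?_
  intro j hj
  rw [Finset.mem_range, Nat.lt_succ_iff] at hj
  have hfac : (Nat.factorial Y : ℝ) = (Y.choose j : ℝ) * (Nat.factorial j) * (Nat.factorial (Y - j)) := by
    exact_mod_cast (Nat.choose_mul_factorial_mul_factorial hj).symm
  have hj1 : (Nat.factorial j : ℝ) ≠ 0 := by exact_mod_cast (Nat.factorial_pos j).ne'
  have hj2 : (Nat.factorial (Y - j) : ℝ) ≠ 0 := by exact_mod_cast (Nat.factorial_pos (Y-j)).ne'
  have hY : (Nat.factorial Y : ℝ) ≠ 0 := by exact_mod_cast (Nat.factorial_pos Y).ne'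
  field_simp
  rw [hfac]
  ring

lemma pois_binom_factor (lam : ℝ) (q : ℝ) (k j : ℕ) :
    poisP lam (k+j) * binomP (k+j) q k = poisP (q*lam) k * poisP ((1-q)*lam) j := by
  unfold poisP binomP
  have hch : ((k+j).choose k * Nat.factorial k * Nat.factorial j : ℝ) = ((k+j).factorial : ℝ) := by
    exact_mod_cast congrArg (Nat.cast (R := ℝ)) (by
      simpa using Nat.choose_mul_factorial_mul_factorial (Nat.le_add_right k j))
  have e1 : Real.exp (-lam) = Real.exp (-(q*lam)) * Real.exp (-((1-q)*lam)) := by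
    rw [← Real.exp_add]; ring_nf
  have h1 : (Nat.factorial k : ℝ) ≠ 0 := by exact_mod_cast (Nat.factorial_pos k).ne'
  have h2 : (Nat.factorial j : ℝ) ≠ 0 := by exact_mod_cast (Nat.factorial_pos j).ne'
  have h3 : (Nat.factorial (k+j) : ℝ) ≠ 0 := by exact_mod_cast (Nat.factorial_pos (k+j)).ne'
  have hkj : k + j - k = j := by omega
  rw [hkj, e1, mul_pow, mul_pow, pow_add]
  field_simp
  rw [← hch]
  ring

lemma pois_multinom {m : ℕ} {p : Fin m → ℝ} (hp : IsProbVec p) {a : ℝ} (z : Fin m → ℕ) :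
    poisP a (∑ i, z i) * multinomP (∑ i, z i) p z = ∏ i, poisP (a * p i) (z i) := by
  unfold poisP multinomP
  rw [if_pos rfl]
  have hspec : ((∏ i, Nat.factorial (z i)) * Nat.multinomial Finset.univ z : ℝ)
      = ((∑ i, z i).factorial : ℝ) := by exact_mod_cast congrArg (Nat.cast (R := ℝ)) (Nat.multinomial_spec _ _)
  have hexp : Real.exp (-a) = ∏ i, Real.exp (-(a * p i)) := by
    rw [← Real.exp_sum]
    congr 1
    rw [Finset.sum_neg_distrib, ← Finset.mul_sum, hp.2, mul_one]
  have hpow : a ^ (∑ i, z i) = ∏ i, a ^ (z i) := Finset.prod_pow_eq_pow_sum _ _ _ |>.symm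
  have h1 : (Nat.factorial (∑ i, z i) : ℝ) ≠ 0 := by exact_mod_cast (Nat.factorial_pos _).ne'
  have h2 : (∏ i, (Nat.factorial (z i) : ℝ)) ≠ 0 := by
    refine Finset.prod_ne_zero_iff.mpr fun i _ => ?_
    exact_mod_cast (Nat.factorial_pos _).ne'
  calc Real.exp (-a) * a ^ (∑ i, z i) / ((∑ i, z i).factorial : ℝ) *
        ((Nat.multinomial Finset.univ z : ℝ) * ∏ i, p i ^ z i)
      = Real.exp (-a) * ((∏ i, a ^ z i) * ∏ i, p i ^ z i) *
          (((∏ i, (Nat.factorial (z i) : ℝ)) * (Nat.multinomial Finset.univ z : ℝ)) / ((∏ i, (Nat.factorial (z i) : ℝ)) * ((∑ i, z i).factorial : ℝ))) := by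
        rw [hpow]
        field_simp
    _ = Real.exp (-a) * ((∏ i, a ^ z i) * ∏ i, p i ^ z i) / (∏ i, (Nat.factorial (z i) : ℝ)) := by
        rw [show ((∏ i, (Nat.factorial (z i) : ℝ)) * (Nat.multinomial Finset.univ z : ℝ)) = ((∑ i, z i).factorial : ℝ) by push_cast at hspec ⊢; linarith [hspec]]
        push_cast
        field_simp
    _ = ∏ i, Real.exp (-(a * p i)) * (a * p i) ^ z i / ((z i).factorial : ℝ) := by
        rw [hexp]
        rw [Finset.prod_div_distrib, Finset.prod_mul_distrib]
        simp_rw [mul_pow]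
        rw [Finset.prod_mul_distrib]
        try push_cast
        try ring

lemma poisP_nonneg {a : ℝ} (ha : 0 ≤ a) (k : ℕ) : 0 ≤ poisP a k := by unfold poisP; positivity

lemma summable_poisP (a : ℝ) : Summable (fun k => poisP a k) := by
  unfold poisP; simp_rw [mul_div_assoc]
  exact (Real.summable_pow_div_factorial a).mul_left _

lemma tsum_poisP (a : ℝ) : ∑' k, poisP a k = 1 := by
  unfold poisP; simp_rw [mul_div_assoc]
  rw [tsum_mul_left,
    show ∑' n : ℕ, a ^ n / (Nat.factorial n : ℝ) = Real.exp a by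
      rw [Real.exp_eq_exp_ℝ, NormedSpace.exp_eq_tsum_div],
    ← Real.exp_add]
  simp

lemma pois_succ (a : ℝ) (k : ℕ) : ((k+1 : ℕ) : ℝ) * poisP a (k+1) = a * poisP a k := by
  unfold poisP
  rw [Nat.factorial_succ, pow_succ]
  have h1 : (Nat.factorial k : ℝ) ≠ 0 := by exact_mod_cast (Nat.factorial_pos k).ne'
  have h2 : (k : ℝ) + 1 ≠ 0 := by positivity
  push_cast
  field_simp

/-- `EP a k = ENNReal.ofReal (poisP a k)` -/
def EP (a : ℝ) (k : ℕ) : ℝ≥0∞ := ENNReal.ofReal (poisP a k)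

lemma EP_ne_top (a : ℝ) (k : ℕ) : EP a k ≠ ⊤ := ENNReal.ofReal_ne_top

lemma tsum_EP {a : ℝ} (ha : 0 ≤ a) : ∑' k, EP a k = 1 := by
  unfold EP
  rw [← ENNReal.ofReal_tsum_of_nonneg (fun k => poisP_nonneg ha k) (summable_poisP a),
    tsum_poisP, ENNReal.ofReal_one]

lemma EP_succ {a : ℝ} (ha : 0 ≤ a) (k : ℕ) :
    ((k+1 : ℕ) : ℝ≥0∞) * EP a (k+1) = ENNReal.ofReal a * EP a k := by
  unfold EP
  rw [← ENNReal.ofReal_natCast, ← ENNReal.ofReal_mul (by positivity), pois_succ,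
    ENNReal.ofReal_mul ha]

lemma tsum_EP_mean {a : ℝ} (ha : 0 ≤ a) :
    ∑' k : ℕ, (k : ℝ≥0∞) * EP a k = ENNReal.ofReal a := by
  have hinj : Function.Injective (fun j : ℕ => j + 1) := fun a b h => by simpa using h
  have hsupp : Function.support (fun k : ℕ => (k : ℝ≥0∞) * EP a k) ⊆ Set.range (fun j : ℕ => j + 1) := by
    intro k hk
    rcases Nat.eq_zero_or_pos k with h0 | h0
    · simp [h0] at hk
    · exact ⟨k - 1, by simp; omega⟩
  rw [← hinj.tsum_eq hsupp]
  calc ∑' j : ℕ, (((j + 1 : ℕ) : ℕ) : ℝ≥0∞) * EP a (j + 1)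
      = ∑' j : ℕ, ENNReal.ofReal a * EP a j := by
        refine tsum_congr fun j => ?_
        exact_mod_cast EP_succ ha j
    _ = ENNReal.ofReal a := by rw [ENNReal.tsum_mul_left, tsum_EP ha, mul_one]

/-- Factorisation over a pi type. -/
lemma tsum_pi_prod {n : ℕ} {β : Type*} (g : Fin n → β → ℝ≥0∞) :
    ∑' f : Fin n → β, ∏ i, g i (f i) = ∏ i, ∑' x : β, g i x := by
  induction n with
  | zero =>
      simp only [Finset.univ_eq_empty, Finset.prod_empty]
      exact tsum_eq_single (fun i => i.elim0) (fun b hb => absurd (Subsingleton.elim _ _) hb)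
  | succ n ih =>
      rw [← (Fin.consEquiv (fun _ => β)).tsum_eq, ENNReal.tsum_prod']
      have h1 : ∀ (x : β) (f : Fin n → β),
          (∏ i, g i ((Fin.consEquiv fun _ => β) (x, f) i))
            = g 0 x * ∏ i : Fin n, g (Fin.succ i) (f i) := by
        intro x f
        rw [Fin.prod_univ_succ]
        simp [Fin.consEquiv]
      simp_rw [h1, ENNReal.tsum_mul_left, ih (fun i => g (Fin.succ i)), ENNReal.tsum_mul_right]
      rw [Fin.prod_univ_succ]

lemma tsum_pi_prod2 {n : ℕ} {β γ : Type*} (g : Fin n → β → γ → ℝ≥0∞) :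
    ∑' (f : Fin n → β) (e : Fin n → γ), ∏ i, g i (f i) (e i)
      = ∏ i, ∑' (x : β) (w : γ), g i x w := by
  calc ∑' (f : Fin n → β) (e : Fin n → γ), ∏ i, g i (f i) (e i)
      = ∑' (f : Fin n → β), ∏ i, ∑' w : γ, g i (f i) w :=
        tsum_congr fun f => tsum_pi_prod (fun i => g i (f i))
    _ = ∏ i, ∑' (x : β) (w : γ), g i x w := tsum_pi_prod (fun i x => ∑' w : γ, g i x w)


-- PART C (appended to p4 for testing)

/-- Column convolution of Poissons. -/
lemma tsum_col {b : ℝ} (hb : 0 ≤ b) : ∀ {n : ℕ} (a : Fin n → ℝ), (∀ i, 0 ≤ a i) → ∀ Y : ℕ,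
    (∑' (z : Fin n → ℕ) (h : ℕ),
        (if (∑ i, z i) + h = Y then (∏ i, EP (a i) (z i)) * EP b h else 0))
      = EP ((∑ i, a i) + b) Y := by
  intro n
  induction n with
  | zero =>
      intro a ha Y
      rw [tsum_eq_single (fun i : Fin 0 => 0) (fun z hz => absurd (Subsingleton.elim _ _) hz)]
      rw [tsum_eq_single Y ?_]
      · simp
      · intro h' hh
        apply if_neg
        simp only [Finset.univ_eq_empty, Finset.sum_empty, zero_add]
        exact hh
  | succ n ih =>
      intro a ha Y
      rw [← (Fin.consEquiv (fun _ => ℕ)).tsum_eq, ENNReal.tsum_prod']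
      have h1 : ∀ (z0 : ℕ) (zt : Fin n → ℕ) (h : ℕ),
          (if (∑ i, (Fin.consEquiv fun _ => ℕ) (z0, zt) i) + h = Y then
              (∏ i, EP (a i) ((Fin.consEquiv fun _ => ℕ) (z0, zt) i)) * EP b h else 0)
          = EP (a 0) z0 * (if (∑ i : Fin n, zt i) + h = Y - z0 ∧ z0 ≤ Y then
              (∏ i : Fin n, EP (a (Fin.succ i)) (zt i)) * EP b h else 0) := by
        intro z0 zt h
        have hsum : (∑ i, (Fin.consEquiv fun _ => ℕ) (z0, zt) i) = z0 + ∑ i : Fin n, zt i := by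
          simp [Fin.consEquiv, Fin.sum_univ_succ]
        have hprod : (∏ i, EP (a i) ((Fin.consEquiv fun _ => ℕ) (z0, zt) i))
            = EP (a 0) z0 * ∏ i : Fin n, EP (a (Fin.succ i)) (zt i) := by
          rw [Fin.prod_univ_succ]; simp [Fin.consEquiv]
        rw [hsum, hprod]
        by_cases hc : (z0 + ∑ i : Fin n, zt i) + h = Y
        · rw [if_pos hc, if_pos ⟨by omega, by omega⟩, mul_assoc]
        · rw [if_neg hc, if_neg (by omega), mul_zero]
      simp_rw [h1, ENNReal.tsum_mul_left]
      have h2 : ∀ z0 : ℕ,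
          (∑' (zt : Fin n → ℕ) (h : ℕ), if (∑ i : Fin n, zt i) + h = Y - z0 ∧ z0 ≤ Y then
              (∏ i : Fin n, EP (a (Fin.succ i)) (zt i)) * EP b h else 0)
          = if z0 ≤ Y then EP ((∑ i : Fin n, a (Fin.succ i)) + b) (Y - z0) else 0 := by
        intro z0
        by_cases hz : z0 ≤ Y
        · rw [if_pos hz]
          simp_rw [hz, and_true]
          exact ih (fun i => a (Fin.succ i)) (fun i => ha (Fin.succ i)) (Y - z0)
        · simp [hz]
      simp_rw [h2]
      rw [tsum_eq_sum (s := Finset.range (Y+1))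
        (fun z0 hz0 => by
          rw [if_neg (by simpa using hz0), mul_zero])]
      have h3 : ∀ j ∈ Finset.range (Y+1),
          EP (a 0) j * (if j ≤ Y then EP ((∑ i : Fin n, a (Fin.succ i)) + b) (Y - j) else 0)
          = ENNReal.ofReal (poisP (a 0) j * poisP ((∑ i : Fin n, a (Fin.succ i)) + b) (Y - j)) := by
        intro j hj
        rw [Finset.mem_range, Nat.lt_succ_iff] at hj
        rw [if_pos hj]
        unfold EP
        rw [ENNReal.ofReal_mul (poisP_nonneg (ha 0) j)]
      rw [Finset.sum_congr rfl h3,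
        ← ENNReal.ofReal_sum_of_nonneg (fun j _ => mul_nonneg (poisP_nonneg (ha 0) j)
          (poisP_nonneg (add_nonneg (Finset.sum_nonneg fun i _ => ha _) hb) _)),
        pois_conv]
      unfold EP
      congr 2
      rw [Fin.sum_univ_succ]
      ring

/-- Weighted column convolution of Poissons. -/
lemma tsum_col_wt {b : ℝ} (hb : 0 ≤ b) {n : ℕ} (a : Fin n → ℝ) (ha : ∀ i, 0 ≤ a i)
    (i₀ : Fin n) (Y : ℕ) :
    (∑' (z : Fin n → ℕ) (h : ℕ),
        (if (∑ i, z i) + h = Y then ((z i₀ : ℕ) : ℝ≥0∞) * ((∏ i, EP (a i) (z i)) * EP b h) else 0))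
      = if Y = 0 then 0 else ENNReal.ofReal (a i₀) * EP ((∑ i, a i) + b) (Y - 1) := by
  set f : (Fin n → ℕ) → (Fin n → ℕ) := fun w => Function.update w i₀ (w i₀ + 1) with hf
  have hinj : Function.Injective f := by
    intro w v h
    funext j
    by_cases hj : j = i₀
    · subst hj
      have h1 := congrFun h j
      simp only [hf, Function.update_self] at h1
      omega
    · have h1 := congrFun h j
      simp only [hf, Function.update_of_ne hj] at h1
      exact h1
  have hsupp : Function.support (fun z : Fin n → ℕ => ∑' h : ℕ,
      (if (∑ i, z i) + h = Y then ((z i₀ : ℕ) : ℝ≥0∞) * ((∏ i, EP (a i) (z i)) * EP b h) else 0))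
      ⊆ Set.range f := by
    intro z hz
    rcases Nat.eq_zero_or_pos (z i₀) with h0 | h0
    · exfalso
      apply hz
      have : ∀ h : ℕ, (if (∑ i, z i) + h = Y then ((z i₀ : ℕ) : ℝ≥0∞) * ((∏ i, EP (a i) (z i)) * EP b h) else 0) = 0 := by
        intro h
        simp [h0]
      simp only [this, tsum_zero]
    · refine ⟨Function.update z i₀ (z i₀ - 1), ?_⟩
      funext j
      by_cases hj : j = i₀
      · subst hj
        simp only [hf, Function.update_self]
        omega
      · simp only [hf, Function.update_of_ne hj]
  rw [← hinj.tsum_eq hsupp]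
  have hterm : ∀ (w : Fin n → ℕ) (h : ℕ),
      (if (∑ i, f w i) + h = Y then ((f w i₀ : ℕ) : ℝ≥0∞) * ((∏ i, EP (a i) (f w i)) * EP b h) else 0)
      = ENNReal.ofReal (a i₀) *
          (if ((∑ i, w i) + h) + 1 = Y then (∏ i, EP (a i) (w i)) * EP b h else 0) := by
    intro w h
    have herase : ∑ i ∈ Finset.univ.erase i₀, f w i = ∑ i ∈ Finset.univ.erase i₀, w i :=
      Finset.sum_congr rfl fun j hj => by
        simp only [hf]
        exact Function.update_of_ne (Finset.ne_of_mem_erase hj) _ _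
    have hwt : f w i₀ = w i₀ + 1 := by simp only [hf, Function.update_self]
    have hsum : (∑ i, f w i) = (∑ i, w i) + 1 := by
      rw [← Finset.add_sum_erase Finset.univ (f w) (Finset.mem_univ i₀),
          ← Finset.add_sum_erase Finset.univ w (Finset.mem_univ i₀), herase, hwt]
      omega
    have hprod : (∏ i, EP (a i) (f w i)) = EP (a i₀) (w i₀ + 1) * ∏ i ∈ Finset.univ.erase i₀, EP (a i) (w i) := by
      rw [← Finset.mul_prod_erase Finset.univ (fun i => EP (a i) (f w i)) (Finset.mem_univ i₀), hwt]
      exact congrArg _ (Finset.prod_congr rfl fun j hj => by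
        simp only [hf]
        exact congrArg _ (Function.update_of_ne (Finset.ne_of_mem_erase hj) _ _))
    rw [hsum, hwt, hprod]
    have hcond : ((∑ i, w i) + 1) + h = Y ↔ ((∑ i, w i) + h) + 1 = Y := by omega
    by_cases hc : ((∑ i, w i) + h) + 1 = Y
    · rw [if_pos (hcond.mpr hc), if_pos hc]
      rw [← mul_assoc, ← mul_assoc, EP_succ (ha i₀)]
      rw [← Finset.mul_prod_erase Finset.univ (fun i => EP (a i) (w i)) (Finset.mem_univ i₀)]
      ring
    · rw [if_neg (fun hx => hc (hcond.mp hx)), if_neg hc, mul_zero]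
  simp_rw [hterm, ENNReal.tsum_mul_left]
  rcases Y with _ | Y'
  · simp
  · rw [if_neg (Nat.succ_ne_zero Y')]
    have hcond2 : ∀ (w : Fin n → ℕ) (h : ℕ),
        (((∑ i, w i) + h) + 1 = Y' + 1) ↔ ((∑ i, w i) + h = Y') := by omega
    simp_rw [hcond2]
    rw [tsum_col hb a ha Y']
    rfl

lemma tsum_EP_binom {lam q : ℝ} (hlam : 0 ≤ lam) (hq0 : 0 ≤ q) (hq1 : q ≤ 1) (k : ℕ) :
    ∑' n : ℕ, ENNReal.ofReal (poisP lam n * binomP n q k) = EP (q * lam) k := by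
  have hinj : Function.Injective (fun j : ℕ => k + j) := fun a b h => by simpa using h
  have hsupp : Function.support (fun n : ℕ => ENNReal.ofReal (poisP lam n * binomP n q k))
      ⊆ Set.range (fun j : ℕ => k + j) := by
    intro n hn
    by_cases hnk : n < k
    · exfalso; apply hn; simp [binomP_eq_zero hnk]
    · exact ⟨n - k, by simp; omega⟩
  rw [← hinj.tsum_eq hsupp]
  have hterm : ∀ j : ℕ, ENNReal.ofReal (poisP lam (k + j) * binomP (k + j) q k)
      = EP (q * lam) k * EP ((1 - q) * lam) j := by
    intro j
    rw [pois_binom_factor, ENNReal.ofReal_mul (poisP_nonneg (mul_nonneg hq0 hlam) k)]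
    rfl
  simp_rw [hterm]
  rw [ENNReal.tsum_mul_left, tsum_EP (mul_nonneg (by linarith) hlam), mul_one]

lemma tsum_EP_binom_wt {lam q : ℝ} (hlam : 0 ≤ lam) (hq0 : 0 ≤ q) (hq1 : q ≤ 1) (k : ℕ) :
    ∑' n : ℕ, (n : ℝ≥0∞) * ENNReal.ofReal (poisP lam n * binomP n q k)
      = ENNReal.ofReal (((k : ℝ) + (1 - q) * lam) * poisP (q * lam) k) := by
  have hinj : Function.Injective (fun j : ℕ => k + j) := fun a b h => by simpa using h
  have hsupp : Function.support (fun n : ℕ => (n : ℝ≥0∞) * ENNReal.ofReal (poisP lam n * binomP n q k))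
      ⊆ Set.range (fun j : ℕ => k + j) := by
    intro n hn
    by_cases hnk : n < k
    · exfalso; apply hn; simp [binomP_eq_zero hnk]
    · exact ⟨n - k, by simp; omega⟩
  rw [← hinj.tsum_eq hsupp]
  have hb : (0:ℝ) ≤ (1 - q) * lam := mul_nonneg (by linarith) hlam
  have hterm : ∀ j : ℕ, (((k + j : ℕ)) : ℝ≥0∞) * ENNReal.ofReal (poisP lam (k + j) * binomP (k + j) q k)
      = (k : ℝ≥0∞) * EP (q * lam) k * EP ((1 - q) * lam) j
        + EP (q * lam) k * ((j : ℝ≥0∞) * EP ((1 - q) * lam) j) := by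
    intro j
    rw [pois_binom_factor, ENNReal.ofReal_mul (poisP_nonneg (mul_nonneg hq0 hlam) k)]
    push_cast
    show ((k : ℝ≥0∞) + (j : ℝ≥0∞)) * (EP (q * lam) k * EP ((1 - q) * lam) j) = _
    ring
  simp_rw [hterm]
  rw [ENNReal.tsum_add, ENNReal.tsum_mul_left, ENNReal.tsum_mul_left,
    tsum_EP hb, mul_one, tsum_EP_mean hb]
  rw [ENNReal.ofReal_mul (add_nonneg (Nat.cast_nonneg k) hb),
    ENNReal.ofReal_add (Nat.cast_nonneg k) hb, ENNReal.ofReal_natCast]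
  show _ = ((k : ℝ≥0∞) + ENNReal.ofReal ((1 - q) * lam)) * EP (q * lam) k
  ring

lemma row_sum {lam q : ℝ} (hlam : 0 ≤ lam) (hq0 : 0 ≤ q) (hq1 : q ≤ 1) {m : ℕ}
    {p : Fin m → ℝ} (hp : IsProbVec p) (Mi : Fin m → ℕ) :
    ∑' (xv : ℕ) (ybv : ℕ), ENNReal.ofReal (poisP lam xv * (binomP xv q ybv * multinomP ybv p Mi))
      = ∏ k, EP (q * lam * p k) (Mi k) := by
  have hmn : 0 ≤ multinomP (∑ k, Mi k) p Mi := multinomP_nonneg hp.1 _ _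
  have hinner : ∀ xv : ℕ,
      (∑' ybv : ℕ, ENNReal.ofReal (poisP lam xv * (binomP xv q ybv * multinomP ybv p Mi)))
      = ENNReal.ofReal (poisP lam xv * binomP xv q (∑ k, Mi k)) * ENNReal.ofReal (multinomP (∑ k, Mi k) p Mi) := by
    intro xv
    rw [tsum_eq_single (∑ k, Mi k) (fun ybv hne => by
      rw [multinomP_eq_zero (fun hc => hne hc.symm), mul_zero, mul_zero, ENNReal.ofReal_zero])]
    rw [← ENNReal.ofReal_mul (mul_nonneg (poisP_nonneg hlam _) (binomP_nonneg hq0 hq1 _ _)),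
      mul_assoc]
  simp_rw [hinner]
  rw [ENNReal.tsum_mul_right, tsum_EP_binom hlam hq0 hq1]
  unfold EP
  rw [← ENNReal.ofReal_mul (poisP_nonneg (mul_nonneg hq0 hlam) _), pois_multinom hp,
    ENNReal.ofReal_prod_of_nonneg (fun k _ => poisP_nonneg (mul_nonneg (mul_nonneg hq0 hlam) (hp.1 k)) _)]

lemma row_sum_wt {lam q : ℝ} (hlam : 0 ≤ lam) (hq0 : 0 ≤ q) (hq1 : q ≤ 1) {m : ℕ}
    {p : Fin m → ℝ} (hp : IsProbVec p) (Mi : Fin m → ℕ) :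
    ∑' (xv : ℕ) (ybv : ℕ), (xv : ℝ≥0∞) *
        ENNReal.ofReal (poisP lam xv * (binomP xv q ybv * multinomP ybv p Mi))
      = ENNReal.ofReal (((∑ k, Mi k : ℕ) : ℝ) + (1 - q) * lam) * ∏ k, EP (q * lam * p k) (Mi k) := by
  have hmn : 0 ≤ multinomP (∑ k, Mi k) p Mi := multinomP_nonneg hp.1 _ _
  have hinner : ∀ xv : ℕ,
      (∑' ybv : ℕ, (xv : ℝ≥0∞) * ENNReal.ofReal (poisP lam xv * (binomP xv q ybv * multinomP ybv p Mi)))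
      = ((xv : ℝ≥0∞) * ENNReal.ofReal (poisP lam xv * binomP xv q (∑ k, Mi k))) * ENNReal.ofReal (multinomP (∑ k, Mi k) p Mi) := by
    intro xv
    rw [tsum_eq_single (∑ k, Mi k) (fun ybv hne => by
      rw [multinomP_eq_zero (fun hc => hne hc.symm), mul_zero, mul_zero, ENNReal.ofReal_zero, mul_zero])]
    rw [mul_assoc]
    congr 1
    rw [← ENNReal.ofReal_mul (mul_nonneg (poisP_nonneg hlam _) (binomP_nonneg hq0 hq1 _ _)),
      mul_assoc]
  simp_rw [hinner]
  rw [ENNReal.tsum_mul_right, tsum_EP_binom_wt hlam hq0 hq1]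
  have hb : (0:ℝ) ≤ (1 - q) * lam := mul_nonneg (by linarith) hlam
  have hs : (0:ℝ) ≤ ((∑ k, Mi k : ℕ) : ℝ) + (1 - q) * lam := add_nonneg (Nat.cast_nonneg _) hb
  rw [ENNReal.ofReal_mul hs, mul_assoc,
    ← ENNReal.ofReal_mul (poisP_nonneg (mul_nonneg hq0 hlam) _), pois_multinom hp,
    ENNReal.ofReal_prod_of_nonneg (fun k _ => poisP_nonneg (mul_nonneg (mul_nonneg hq0 hlam) (hp.1 k)) _)]
  exact congrArg _ (Finset.prod_congr rfl fun k _ => by rw [mul_assoc]; exact rfl)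

lemma ite_prod_split {m : ℕ} (P : Fin m → Prop) (f : Fin m → ℝ≥0∞) :
    (if (∀ k, P k) then ∏ k, f k else 0) = ∏ k, (if P k then f k else 0) := by
  by_cases h : ∀ k, P k
  · rw [if_pos h]; exact Finset.prod_congr rfl fun k _ => (if_pos (h k)).symm
  · rw [if_neg h]
    obtain ⟨k0, hk0⟩ := not_forall.mp h
    symm
    exact Finset.prod_eq_zero (Finset.mem_univ k0) (if_neg hk0)

lemma tsum_yh {m : ℕ} (c y : Fin m → ℕ) (v : (Fin m → ℕ) → ℝ≥0∞) :
    ∑' yh : Fin m → ℕ, (if (fun k => c k + yh k) = y then v yh else 0)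
      = if ∀ k, c k ≤ y k then v (fun k => y k - c k) else 0 := by
  by_cases h : ∀ k, c k ≤ y k
  · rw [if_pos h, tsum_eq_single (fun k => y k - c k) ?_]
    · rw [if_pos]
      funext k
      have := h k
      simp only
      omega
    · intro yh' hne
      rw [if_neg]
      intro he
      apply hne
      funext k
      have := congrFun he k
      omega
  · rw [if_neg h]
    have h0 : ∀ yh : Fin m → ℕ, (if (fun k => c k + yh k) = y then v yh else 0) = 0 := by
      intro yh
      rw [if_neg]
      intro he
      exact h (fun k => by have := congrFun he k; omega)
    simp only [h0, tsum_zero]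

def transEquiv (m : ℕ) : (Fin m → Fin m → ℕ) ≃ (Fin m → Fin m → ℕ) where
  toFun N := fun i k => N k i
  invFun N := fun i k => N k i
  left_inv N := rfl
  right_inv N := rfl

lemma col_step {m : ℕ} (y : Fin m → ℕ) (F : Fin m → (Fin m → ℕ) → ℕ → ℝ≥0∞) :
    ∑' (M : Fin m → Fin m → ℕ) (yh : Fin m → ℕ),
        (if (fun k => (∑ i, M i k) + yh k) = y then ∏ k, F k (fun i => M i k) (yh k) else 0)
      = ∏ k, ∑' (col : Fin m → ℕ) (h : ℕ), (if (∑ i, col i) + h = y k then F k col h else 0) := by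
  have h1 : ∀ (M : Fin m → Fin m → ℕ) (yh : Fin m → ℕ),
      (if (fun k => (∑ i, M i k) + yh k) = y then ∏ k, F k (fun i => M i k) (yh k) else 0)
      = ∏ k, (if (∑ i, M i k) + yh k = y k then F k (fun i => M i k) (yh k) else 0) := by
    intro M yh
    by_cases hc : (fun k => (∑ i, M i k) + yh k) = y
    · rw [if_pos hc]
      exact Finset.prod_congr rfl fun k _ => (if_pos (congrFun hc k)).symm
    · rw [if_neg hc]
      obtain ⟨k0, hk0⟩ := not_forall.mp (fun hall => hc (funext hall))
      symm
      exact Finset.prod_eq_zero (Finset.mem_univ k0) (if_neg hk0)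
  simp_rw [h1]
  rw [← (transEquiv m).tsum_eq]
  exact tsum_pi_prod2 (fun k col h => if (∑ i, col i) + h = y k then F k col h else 0)

lemma EP_def (a : ℝ) (k : ℕ) : EP a k = ENNReal.ofReal (poisP a k) := rfl

lemma main_reduce {m : ℕ} (lam q κ : Fin m → ℝ) (G : Fin m → Fin m → ℝ)
    (hlam : ∀ i, 0 ≤ lam i) (hq0 : ∀ i, 0 ≤ q i) (hq1 : ∀ i, q i ≤ 1)
    (hG0 : ∀ i j, 0 ≤ G i j) (hκ : ∀ k, 0 ≤ κ k) (y : Fin m → ℕ)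
    (wf : Fin m → ℕ → ℝ≥0∞) :
    (∑' (x : Fin m → ℕ) (yb : Fin m → ℕ) (M : Fin m → Fin m → ℕ) (yh : Fin m → ℕ),
        (if (fun k => (∑ i, M i k) + yh k) = y then
          (∏ i, wf i (x i)) * ENNReal.ofReal
            ((∏ i, poisP (lam i) (x i)) * (∏ i, binomP (x i) (q i) (yb i)) *
              (∏ i, multinomP (yb i) (G i) (M i)) * ∏ k, poisP (κ k) (yh k)) else 0))
      = ∑' (M : Fin m → Fin m → ℕ) (yh : Fin m → ℕ),
          (if (fun k => (∑ i, M i k) + yh k) = y then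
            (∏ i, ∑' (xv : ℕ) (ybv : ℕ), wf i xv * ENNReal.ofReal
                (poisP (lam i) xv * (binomP xv (q i) ybv * multinomP ybv (G i) (M i)))) *
              ∏ k, EP (κ k) (yh k) else 0) := by
  have hsplit : ∀ (x yb : Fin m → ℕ) (M : Fin m → Fin m → ℕ) (yh : Fin m → ℕ),
      (∏ i, wf i (x i)) * ENNReal.ofReal
          ((∏ i, poisP (lam i) (x i)) * (∏ i, binomP (x i) (q i) (yb i)) *
            (∏ i, multinomP (yb i) (G i) (M i)) * ∏ k, poisP (κ k) (yh k))
      = (∏ i, wf i (x i) * ENNReal.ofReal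
            (poisP (lam i) (x i) * (binomP (x i) (q i) (yb i) * multinomP (yb i) (G i) (M i)))) *
          ∏ k, EP (κ k) (yh k) := by
    intro x yb M yh
    have n1 : (0:ℝ) ≤ ∏ i, poisP (lam i) (x i) :=
      Finset.prod_nonneg fun i _ => poisP_nonneg (hlam i) _
    have n2 : (0:ℝ) ≤ ∏ i, binomP (x i) (q i) (yb i) :=
      Finset.prod_nonneg fun i _ => binomP_nonneg (hq0 i) (hq1 i) _ _
    have n3 : (0:ℝ) ≤ ∏ i, multinomP (yb i) (G i) (M i) :=
      Finset.prod_nonneg fun i _ => multinomP_nonneg (fun j => hG0 i j) _ _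
    have hrow : ∀ i : Fin m, wf i (x i) * ENNReal.ofReal
          (poisP (lam i) (x i) * (binomP (x i) (q i) (yb i) * multinomP (yb i) (G i) (M i)))
        = wf i (x i) * (ENNReal.ofReal (poisP (lam i) (x i)) *
            (ENNReal.ofReal (binomP (x i) (q i) (yb i)) *
              ENNReal.ofReal (multinomP (yb i) (G i) (M i)))) := by
      intro i
      rw [ENNReal.ofReal_mul (poisP_nonneg (hlam i) _),
        ENNReal.ofReal_mul (binomP_nonneg (hq0 i) (hq1 i) _ _)]
    simp only [EP_def]
    rw [ENNReal.ofReal_mul (mul_nonneg (mul_nonneg n1 n2) n3),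
      ENNReal.ofReal_mul (mul_nonneg n1 n2),
      ENNReal.ofReal_mul n1,
      ENNReal.ofReal_prod_of_nonneg (fun i _ => poisP_nonneg (hlam i) _),
      ENNReal.ofReal_prod_of_nonneg (fun i _ => binomP_nonneg (hq0 i) (hq1 i) _ _),
      ENNReal.ofReal_prod_of_nonneg (fun i _ => multinomP_nonneg (fun j => hG0 i j) _ _),
      ENNReal.ofReal_prod_of_nonneg (fun k _ => poisP_nonneg (hκ k) _),
      Finset.prod_congr rfl (fun i _ => hrow i),
      Finset.prod_mul_distrib, Finset.prod_mul_distrib, Finset.prod_mul_distrib]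
    ring
  simp_rw [hsplit]
  calc ∑' (x : Fin m → ℕ) (yb : Fin m → ℕ) (M : Fin m → Fin m → ℕ) (yh : Fin m → ℕ),
        (if (fun k => (∑ i, M i k) + yh k) = y then
          (∏ i, wf i (x i) * ENNReal.ofReal
              (poisP (lam i) (x i) * (binomP (x i) (q i) (yb i) * multinomP (yb i) (G i) (M i)))) *
            ∏ k, EP (κ k) (yh k) else 0)
      = ∑' (x : Fin m → ℕ) (M : Fin m → Fin m → ℕ) (yb : Fin m → ℕ) (yh : Fin m → ℕ),
        (if (fun k => (∑ i, M i k) + yh k) = y then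
          (∏ i, wf i (x i) * ENNReal.ofReal
              (poisP (lam i) (x i) * (binomP (x i) (q i) (yb i) * multinomP (yb i) (G i) (M i)))) *
            ∏ k, EP (κ k) (yh k) else 0) := tsum_congr fun x => ENNReal.tsum_comm
    _ = ∑' (M : Fin m → Fin m → ℕ) (x : Fin m → ℕ) (yb : Fin m → ℕ) (yh : Fin m → ℕ),
        (if (fun k => (∑ i, M i k) + yh k) = y then
          (∏ i, wf i (x i) * ENNReal.ofReal
              (poisP (lam i) (x i) * (binomP (x i) (q i) (yb i) * multinomP (yb i) (G i) (M i)))) *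
            ∏ k, EP (κ k) (yh k) else 0) := ENNReal.tsum_comm
    _ = ∑' (M : Fin m → Fin m → ℕ) (x : Fin m → ℕ) (yh : Fin m → ℕ) (yb : Fin m → ℕ),
        (if (fun k => (∑ i, M i k) + yh k) = y then
          (∏ i, wf i (x i) * ENNReal.ofReal
              (poisP (lam i) (x i) * (binomP (x i) (q i) (yb i) * multinomP (yb i) (G i) (M i)))) *
            ∏ k, EP (κ k) (yh k) else 0) :=
        tsum_congr fun M => tsum_congr fun x => ENNReal.tsum_comm
    _ = ∑' (M : Fin m → Fin m → ℕ) (yh : Fin m → ℕ) (x : Fin m → ℕ) (yb : Fin m → ℕ),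
        (if (fun k => (∑ i, M i k) + yh k) = y then
          (∏ i, wf i (x i) * ENNReal.ofReal
              (poisP (lam i) (x i) * (binomP (x i) (q i) (yb i) * multinomP (yb i) (G i) (M i)))) *
            ∏ k, EP (κ k) (yh k) else 0) := tsum_congr fun M => ENNReal.tsum_comm
    _ = ∑' (M : Fin m → Fin m → ℕ) (yh : Fin m → ℕ),
          (if (fun k => (∑ i, M i k) + yh k) = y then
            (∏ i, ∑' (xv : ℕ) (ybv : ℕ), wf i xv * ENNReal.ofReal
                (poisP (lam i) xv * (binomP xv (q i) ybv * multinomP ybv (G i) (M i)))) *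
              ∏ k, EP (κ k) (yh k) else 0) := by
        refine tsum_congr fun M => tsum_congr fun yh => ?_
        by_cases hc : (fun k => (∑ i, M i k) + yh k) = y
        · simp only [if_pos hc]
          simp_rw [ENNReal.tsum_mul_right]
          rw [tsum_pi_prod2 (fun i xv ybv => wf i xv * ENNReal.ofReal
            (poisP (lam i) xv * (binomP xv (q i) ybv * multinomP ybv (G i) (M i))))]
        · simp only [if_neg hc, tsum_zero]

lemma T0_eval {m : ℕ} (lam q κ : Fin m → ℝ) (G : Fin m → Fin m → ℝ)
    (hlam : ∀ i, 0 ≤ lam i) (hq0 : ∀ i, 0 ≤ q i)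
    (hG0 : ∀ i j, 0 ≤ G i j) (hκ : ∀ k, 0 ≤ κ k) (y : Fin m → ℕ) :
    (∑' (M : Fin m → Fin m → ℕ) (yh : Fin m → ℕ),
        (if (fun k => (∑ i, M i k) + yh k) = y then
          (∏ i, ∏ k, EP (q i * lam i * G i k) (M i k)) * ∏ k, EP (κ k) (yh k) else 0))
      = ∏ k, EP ((∑ l, q l * lam l * G l k) + κ k) (y k) := by
  have h1 : ∀ (M : Fin m → Fin m → ℕ) (yh : Fin m → ℕ),
      (∏ i, ∏ k, EP (q i * lam i * G i k) (M i k)) * ∏ k, EP (κ k) (yh k)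
      = ∏ k, ((∏ i, EP (q i * lam i * G i k) (M i k)) * EP (κ k) (yh k)) := by
    intro M yh
    rw [Finset.prod_comm, Finset.prod_mul_distrib]
  simp_rw [h1]
  rw [col_step y (fun k col h => (∏ i, EP (q i * lam i * G i k) (col i)) * EP (κ k) h)]
  exact Finset.prod_congr rfl fun k _ =>
    tsum_col (hκ k) (fun i => q i * lam i * G i k)
      (fun i => mul_nonneg (mul_nonneg (hq0 i) (hlam i)) (hG0 i k)) (y k)

lemma bridge {m : ℕ}
    (joint : (Fin m → ℕ) → (Fin m → ℕ) → (Fin m → Fin m → ℕ) → (Fin m → ℕ) → ℝ)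
    (hjnn : ∀ x yb M yh, 0 ≤ joint x yb M yh)
    (hv1 : ∀ x yb M yh, (∃ i, x i < yb i) → joint x yb M yh = 0)
    (hv2 : ∀ x yb M yh, (∃ i, (∑ k, M i k) ≠ yb i) → joint x yb M yh = 0)
    (y : Fin m → ℕ) (wR : (Fin m → ℕ) → ℝ) (hwR : ∀ x, 0 ≤ wR x) :
    (∑' (x : Fin m → ℕ) (yb : Fin m → ℕ) (M : Fin m → Fin m → ℕ) (yh : Fin m → ℕ),
        (if (fun k => (∑ i, M i k) + yh k) = y then wR x * joint x yb M yh else 0))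
      = (∑' (x : Fin m → ℕ) (yb : Fin m → ℕ) (M : Fin m → Fin m → ℕ) (yh : Fin m → ℕ),
          (if (fun k => (∑ i, M i k) + yh k) = y then
            ENNReal.ofReal (wR x * joint x yb M yh) else 0)).toReal := by
  set g : (Fin m → ℕ) → (Fin m → ℕ) → (Fin m → Fin m → ℕ) → (Fin m → ℕ) → ℝ≥0∞ :=
    fun x yb M yh => if (fun k => (∑ i, M i k) + yh k) = y then
      ENNReal.ofReal (wR x * joint x yb M yh) else 0 with hg
  have h4 : ∀ x yb M yh, g x yb M yh ≠ ⊤ := by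
    intro x yb M yh
    simp only [hg]
    split
    · exact ENNReal.ofReal_ne_top
    · exact ENNReal.zero_ne_top
  have h3 : ∀ x yb M, (∑' yh, g x yb M yh) ≠ ⊤ := by
    intro x yb M
    rw [show (∑' yh, g x yb M yh) = _ from
      tsum_yh (fun k => ∑ i, M i k) y (fun yh => ENNReal.ofReal (wR x * joint x yb M yh))]
    split
    · exact ENNReal.ofReal_ne_top
    · exact ENNReal.zero_ne_top
  have hzM : ∀ (x yb : Fin m → ℕ) (M : Fin m → Fin m → ℕ),
      M ∉ Fintype.piFinset (fun i => Fintype.piFinset (fun _ : Fin m => Finset.range (yb i + 1))) →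
      (∑' yh, g x yb M yh) = 0 := by
    intro x yb M hM
    have : ∃ i, ∑ k, M i k ≠ yb i := by
      by_contra hall
      push_neg at hall
      apply hM
      rw [Fintype.mem_piFinset]
      intro i
      rw [Fintype.mem_piFinset]
      intro k
      rw [Finset.mem_range]
      have hle : M i k ≤ ∑ k', M i k' := Finset.single_le_sum (fun k' _ => Nat.zero_le _) (Finset.mem_univ k)
      have heq := hall i
      omega
    have hz : ∀ yh, g x yb M yh = 0 := by
      intro yh
      simp only [hg]
      simp only [hv2 x yb M yh this, mul_zero, ENNReal.ofReal_zero, ite_self]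
    simp only [hz, tsum_zero]
  have h2 : ∀ x yb, (∑' (M : Fin m → Fin m → ℕ) (yh : Fin m → ℕ), g x yb M yh) ≠ ⊤ := by
    intro x yb
    rw [tsum_eq_sum (hzM x yb)]
    exact (ENNReal.sum_lt_top.mpr fun M _ => (h3 x yb M).lt_top).ne
  have hzyb : ∀ (x yb : Fin m → ℕ),
      yb ∉ Fintype.piFinset (fun i => Finset.range (x i + 1)) →
      (∑' (M : Fin m → Fin m → ℕ) (yh : Fin m → ℕ), g x yb M yh) = 0 := by
    intro x yb hyb
    have hex : ∃ i, x i < yb i := by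
      by_contra hall
      push_neg at hall
      apply hyb
      rw [Fintype.mem_piFinset]
      intro i
      rw [Finset.mem_range]
      have := hall i
      omega
    have hz : ∀ M yh, g x yb M yh = 0 := by
      intro M yh
      simp only [hg]
      simp only [hv1 x yb M yh hex, mul_zero, ENNReal.ofReal_zero, ite_self]
    simp only [hz, tsum_zero]
  have h1 : ∀ x, (∑' (yb : Fin m → ℕ) (M : Fin m → Fin m → ℕ) (yh : Fin m → ℕ), g x yb M yh) ≠ ⊤ := by
    intro x
    rw [tsum_eq_sum (hzyb x)]
    exact (ENNReal.sum_lt_top.mpr fun yb _ => (h2 x yb).lt_top).ne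
  have e4 : ∀ x yb M,
      (∑' yh, (if (fun k => (∑ i, M i k) + yh k) = y then wR x * joint x yb M yh else 0))
      = (∑' yh, g x yb M yh).toReal := by
    intro x yb M
    rw [ENNReal.tsum_toReal_eq (h4 x yb M)]
    refine tsum_congr fun yh => ?_
    simp only [hg]
    split
    · exact (ENNReal.toReal_ofReal (mul_nonneg (hwR x) (hjnn x yb M yh))).symm
    · exact ENNReal.toReal_zero.symm
  have e3 : ∀ x yb,
      (∑' (M : Fin m → Fin m → ℕ) (yh : Fin m → ℕ), (if (fun k => (∑ i, M i k) + yh k) = y then wR x * joint x yb M yh else 0))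
      = (∑' (M : Fin m → Fin m → ℕ) (yh : Fin m → ℕ), g x yb M yh).toReal := by
    intro x yb
    rw [ENNReal.tsum_toReal_eq (h3 x yb)]
    exact tsum_congr fun M => e4 x yb M
  have e2 : ∀ x,
      (∑' (yb : Fin m → ℕ) (M : Fin m → Fin m → ℕ) (yh : Fin m → ℕ),
        (if (fun k => (∑ i, M i k) + yh k) = y then wR x * joint x yb M yh else 0))
      = (∑' (yb : Fin m → ℕ) (M : Fin m → Fin m → ℕ) (yh : Fin m → ℕ), g x yb M yh).toReal := by
    intro x
    rw [ENNReal.tsum_toReal_eq (h2 x)]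
    exact tsum_congr fun yb => e3 x yb
  rw [ENNReal.tsum_toReal_eq h1]
  exact tsum_congr fun x => e2 x

lemma T1_eval {m : ℕ} (lam q κ : Fin m → ℝ) (G : Fin m → Fin m → ℝ)
    (hlam : ∀ i, 0 ≤ lam i) (hq0 : ∀ i, 0 ≤ q i)
    (hG0 : ∀ i j, 0 ≤ G i j) (hκ : ∀ k, 0 ≤ κ k) (y : Fin m → ℕ) (i₀ k₀ : Fin m) :
    (∑' (M : Fin m → Fin m → ℕ) (yh : Fin m → ℕ),
        (if (fun k => (∑ i, M i k) + yh k) = y then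
          ((M i₀ k₀ : ℕ) : ℝ≥0∞) *
            ((∏ i, ∏ k, EP (q i * lam i * G i k) (M i k)) * ∏ k, EP (κ k) (yh k)) else 0))
      = ∏ k, (if k = k₀ then
          (if y k = 0 then 0 else ENNReal.ofReal (q i₀ * lam i₀ * G i₀ k) *
            EP ((∑ l, q l * lam l * G l k) + κ k) (y k - 1))
          else EP ((∑ l, q l * lam l * G l k) + κ k) (y k)) := by
  have ha : ∀ (k : Fin m) (i : Fin m), 0 ≤ q i * lam i * G i k :=
    fun k i => mul_nonneg (mul_nonneg (hq0 i) (hlam i)) (hG0 i k)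
  have h1 : ∀ (M : Fin m → Fin m → ℕ) (yh : Fin m → ℕ),
      ((M i₀ k₀ : ℕ) : ℝ≥0∞) *
          ((∏ i, ∏ k, EP (q i * lam i * G i k) (M i k)) * ∏ k, EP (κ k) (yh k))
      = ∏ k, ((if k = k₀ then ((M i₀ k : ℕ) : ℝ≥0∞) else 1) *
          ((∏ i, EP (q i * lam i * G i k) (M i k)) * EP (κ k) (yh k))) := by
    intro M yh
    rw [Finset.prod_mul_distrib, Finset.prod_mul_distrib,
      Finset.prod_ite_eq' Finset.univ k₀ (fun k => ((M i₀ k : ℕ) : ℝ≥0∞)),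
      if_pos (Finset.mem_univ k₀), Finset.prod_comm (f := fun i k => EP (q i * lam i * G i k) (M i k))]
  simp_rw [h1]
  rw [col_step y (fun k col h => (if k = k₀ then ((col i₀ : ℕ) : ℝ≥0∞) else 1) *
    ((∏ i, EP (q i * lam i * G i k) (col i)) * EP (κ k) h))]
  refine Finset.prod_congr rfl fun k _ => ?_
  by_cases hk : k = k₀
  · rw [if_pos hk]
    refine (tsum_congr fun col => (tsum_congr fun h => ?_)).trans
      (tsum_col_wt (hκ k) (fun i => q i * lam i * G i k) (ha k) i₀ (y k))
    rw [if_pos hk]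
  · rw [if_neg hk]
    refine (tsum_congr fun col => (tsum_congr fun h => ?_)).trans
      (tsum_col (hκ k) (fun i => q i * lam i * G i k) (ha k) (y k))
    rw [if_neg hk, one_mul]

lemma T0_full {m : ℕ} (lam q κ : Fin m → ℝ) (G : Fin m → Fin m → ℝ)
    (hlam : ∀ i, 0 ≤ lam i) (hq0 : ∀ i, 0 ≤ q i) (hq1 : ∀ i, q i ≤ 1)
    (hG : IsStochastic G) (hκ : ∀ k, 0 ≤ κ k)
    (joint : (Fin m → ℕ) → (Fin m → ℕ) → (Fin m → Fin m → ℕ) → (Fin m → ℕ) → ℝ)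
    (hjoint : ∀ x yb M yh, joint x yb M yh =
      (∏ i, poisP (lam i) (x i)) * (∏ i, binomP (x i) (q i) (yb i)) *
        (∏ i, multinomP (yb i) (G i) (M i)) * ∏ k, poisP (κ k) (yh k))
    (y : Fin m → ℕ) :
    (∑' (x : Fin m → ℕ) (yb : Fin m → ℕ) (M : Fin m → Fin m → ℕ) (yh : Fin m → ℕ),
        (if (fun k => (∑ i, M i k) + yh k) = y then ENNReal.ofReal (joint x yb M yh) else 0))
      = ∏ k, EP ((∑ l, q l * lam l * G l k) + κ k) (y k) := by
  refine Eq.trans ?_ ((main_reduce lam q κ G hlam hq0 hq1 hG.1 hκ y (fun _ _ => 1)).trans ?_)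
  · refine tsum_congr fun x => tsum_congr fun yb => tsum_congr fun M => tsum_congr fun yh => ?_
    rw [hjoint]
    simp
  · refine Eq.trans ?_ (T0_eval lam q κ G hlam hq0 hG.1 hκ y)
    refine tsum_congr fun M => tsum_congr fun yh => ?_
    by_cases hc : (fun k => (∑ i, M i k) + yh k) = y
    · rw [if_pos hc, if_pos hc]
      refine congrArg (· * ∏ k, EP (κ k) (yh k)) (Finset.prod_congr rfl fun i _ => ?_)
      refine Eq.trans ?_ (row_sum (hlam i) (hq0 i) (hq1 i) ⟨fun j => hG.1 i j, hG.2 i⟩ (M i))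
      refine tsum_congr fun xv => tsum_congr fun ybv => ?_
      simp
    · rw [if_neg hc, if_neg hc]

lemma T1_full {m : ℕ} (lam q κ : Fin m → ℝ) (G : Fin m → Fin m → ℝ)
    (hlam : ∀ i, 0 ≤ lam i) (hq0 : ∀ i, 0 ≤ q i) (hq1 : ∀ i, q i ≤ 1)
    (hG : IsStochastic G) (hκ : ∀ k, 0 ≤ κ k)
    (joint : (Fin m → ℕ) → (Fin m → ℕ) → (Fin m → Fin m → ℕ) → (Fin m → ℕ) → ℝ)
    (hjoint : ∀ x yb M yh, joint x yb M yh =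
      (∏ i, poisP (lam i) (x i)) * (∏ i, binomP (x i) (q i) (yb i)) *
        (∏ i, multinomP (yb i) (G i) (M i)) * ∏ k, poisP (κ k) (yh k))
    (y : Fin m → ℕ) (i₀ : Fin m) :
    (∑' (x : Fin m → ℕ) (yb : Fin m → ℕ) (M : Fin m → Fin m → ℕ) (yh : Fin m → ℕ),
        (if (fun k => (∑ i, M i k) + yh k) = y then
          ENNReal.ofReal (((x i₀ : ℕ) : ℝ) * joint x yb M yh) else 0))
      = ENNReal.ofReal ((1 - q i₀) * lam i₀) *
          ∏ k, EP ((∑ l, q l * lam l * G l k) + κ k) (y k)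
        + ∑ k₀, ∏ k, (if k = k₀ then
            (if y k = 0 then 0 else ENNReal.ofReal (q i₀ * lam i₀ * G i₀ k) *
              EP ((∑ l, q l * lam l * G l k) + κ k) (y k - 1))
            else EP ((∑ l, q l * lam l * G l k) + κ k) (y k)) := by
  have hc₀ : (0:ℝ) ≤ (1 - q i₀) * lam i₀ := mul_nonneg (by linarith [hq1 i₀]) (hlam i₀)
  refine Eq.trans ?_ ((main_reduce lam q κ G hlam hq0 hq1 hG.1 hκ y
      (fun i n => if i = i₀ then ((n : ℕ) : ℝ≥0∞) else 1)).trans ?_)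
  · refine tsum_congr fun x => tsum_congr fun yb => tsum_congr fun M => tsum_congr fun yh => ?_
    rw [hjoint, ENNReal.ofReal_mul (Nat.cast_nonneg _), ENNReal.ofReal_natCast]
    have hw : (∏ i, (fun (i : Fin m) (n : ℕ) => if i = i₀ then ((n : ℕ) : ℝ≥0∞) else 1) i (x i))
        = ((x i₀ : ℕ) : ℝ≥0∞) := by
      show (∏ i, if i = i₀ then ((x i : ℕ) : ℝ≥0∞) else 1) = _
      rw [Finset.prod_ite_eq' Finset.univ i₀ (fun i => ((x i : ℕ) : ℝ≥0∞)),
        if_pos (Finset.mem_univ i₀)]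
    rw [hw]
  · -- rewrite row sums
    have hrow : ∀ (M : Fin m → Fin m → ℕ),
        (∏ i, ∑' (xv : ℕ) (ybv : ℕ),
            (fun (i : Fin m) (n : ℕ) => if i = i₀ then ((n : ℕ) : ℝ≥0∞) else 1) i xv *
              ENNReal.ofReal (poisP (lam i) xv * (binomP xv (q i) ybv * multinomP ybv (G i) (M i))))
        = ENNReal.ofReal (((∑ k, M i₀ k : ℕ) : ℝ) + (1 - q i₀) * lam i₀) *
            ∏ i, ∏ k, EP (q i * lam i * G i k) (M i k) := by
      intro M
      have hper : ∀ i : Fin m,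
          (∑' (xv : ℕ) (ybv : ℕ),
            (fun (i : Fin m) (n : ℕ) => if i = i₀ then ((n : ℕ) : ℝ≥0∞) else 1) i xv *
              ENNReal.ofReal (poisP (lam i) xv * (binomP xv (q i) ybv * multinomP ybv (G i) (M i))))
          = (if i = i₀ then ENNReal.ofReal (((∑ k, M i k : ℕ) : ℝ) + (1 - q i) * lam i) else 1) *
              ∏ k, EP (q i * lam i * G i k) (M i k) := by
        intro i
        by_cases hi : i = i₀
        · rw [if_pos hi]
          refine Eq.trans ?_ (row_sum_wt (hlam i) (hq0 i) (hq1 i) ⟨fun j => hG.1 i j, hG.2 i⟩ (M i))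
          refine tsum_congr fun xv => tsum_congr fun ybv => ?_
          simp [hi]
        · rw [if_neg hi, one_mul]
          refine Eq.trans ?_ (row_sum (hlam i) (hq0 i) (hq1 i) ⟨fun j => hG.1 i j, hG.2 i⟩ (M i))
          refine tsum_congr fun xv => tsum_congr fun ybv => ?_
          simp [hi]
      rw [Finset.prod_congr rfl fun i _ => hper i, Finset.prod_mul_distrib,
        Finset.prod_ite_eq' Finset.univ i₀
          (fun i => ENNReal.ofReal (((∑ k, M i k : ℕ) : ℝ) + (1 - q i) * lam i)),
        if_pos (Finset.mem_univ i₀)]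
    have hsplit3 : ∀ (M : Fin m → Fin m → ℕ) (yh : Fin m → ℕ),
        (if (fun k => (∑ i, M i k) + yh k) = y then
          (ENNReal.ofReal (((∑ k, M i₀ k : ℕ) : ℝ) + (1 - q i₀) * lam i₀) *
            ∏ i, ∏ k, EP (q i * lam i * G i k) (M i k)) * ∏ k, EP (κ k) (yh k) else 0)
        = (if (fun k => (∑ i, M i k) + yh k) = y then
            ENNReal.ofReal ((1 - q i₀) * lam i₀) *
              ((∏ i, ∏ k, EP (q i * lam i * G i k) (M i k)) * ∏ k, EP (κ k) (yh k)) else 0)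
          + ∑ k₀, (if (fun k => (∑ i, M i k) + yh k) = y then
              ((M i₀ k₀ : ℕ) : ℝ≥0∞) *
                ((∏ i, ∏ k, EP (q i * lam i * G i k) (M i k)) * ∏ k, EP (κ k) (yh k)) else 0) := by
      intro M yh
      by_cases hc : (fun k => (∑ i, M i k) + yh k) = y
      · simp only [if_pos hc]
        rw [ENNReal.ofReal_add (Nat.cast_nonneg _) hc₀, ENNReal.ofReal_natCast, Nat.cast_sum]
        rw [add_mul, add_mul, Finset.sum_mul, Finset.sum_mul, add_comm]
        congr 1
        · rw [mul_assoc]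
        · exact Finset.sum_congr rfl fun k _ => by rw [mul_assoc]
      · simp only [if_neg hc, Finset.sum_const_zero, add_zero]
    calc ∑' (M : Fin m → Fin m → ℕ) (yh : Fin m → ℕ),
          (if (fun k => (∑ i, M i k) + yh k) = y then
            (∏ i, ∑' (xv : ℕ) (ybv : ℕ),
              (fun (i : Fin m) (n : ℕ) => if i = i₀ then ((n : ℕ) : ℝ≥0∞) else 1) i xv *
                ENNReal.ofReal (poisP (lam i) xv * (binomP xv (q i) ybv * multinomP ybv (G i) (M i)))) *
              ∏ k, EP (κ k) (yh k) else 0)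
        = ∑' (M : Fin m → Fin m → ℕ) (yh : Fin m → ℕ),
          ((if (fun k => (∑ i, M i k) + yh k) = y then
            ENNReal.ofReal ((1 - q i₀) * lam i₀) *
              ((∏ i, ∏ k, EP (q i * lam i * G i k) (M i k)) * ∏ k, EP (κ k) (yh k)) else 0)
          + ∑ k₀, (if (fun k => (∑ i, M i k) + yh k) = y then
              ((M i₀ k₀ : ℕ) : ℝ≥0∞) *
                ((∏ i, ∏ k, EP (q i * lam i * G i k) (M i k)) * ∏ k, EP (κ k) (yh k)) else 0)) := by
          refine tsum_congr fun M => tsum_congr fun yh => ?_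
          rw [hrow M]
          exact hsplit3 M yh
      _ = ENNReal.ofReal ((1 - q i₀) * lam i₀) *
            ∏ k, EP ((∑ l, q l * lam l * G l k) + κ k) (y k)
          + ∑ k₀, ∏ k, (if k = k₀ then
              (if y k = 0 then 0 else ENNReal.ofReal (q i₀ * lam i₀ * G i₀ k) *
                EP ((∑ l, q l * lam l * G l k) + κ k) (y k - 1))
              else EP ((∑ l, q l * lam l * G l k) + κ k) (y k)) := by
          rw [show ∀ (f g : (Fin m → Fin m → ℕ) → (Fin m → ℕ) → ℝ≥0∞),
            (∑' (M : Fin m → Fin m → ℕ) (yh : Fin m → ℕ), (f M yh + g M yh))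
              = (∑' (M : Fin m → Fin m → ℕ) (yh : Fin m → ℕ), f M yh)
                + (∑' (M : Fin m → Fin m → ℕ) (yh : Fin m → ℕ), g M yh) from
            fun f g => by
              rw [← ENNReal.tsum_add]
              exact tsum_congr fun M => ENNReal.tsum_add]
          congr 1
          · -- constant part
            have hpull : ∀ (M : Fin m → Fin m → ℕ) (yh : Fin m → ℕ),
                (if (fun k => (∑ i, M i k) + yh k) = y then
                  ENNReal.ofReal ((1 - q i₀) * lam i₀) *
                    ((∏ i, ∏ k, EP (q i * lam i * G i k) (M i k)) * ∏ k, EP (κ k) (yh k)) else 0)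
                = ENNReal.ofReal ((1 - q i₀) * lam i₀) *
                    (if (fun k => (∑ i, M i k) + yh k) = y then
                      (∏ i, ∏ k, EP (q i * lam i * G i k) (M i k)) * ∏ k, EP (κ k) (yh k) else 0) := by
              intro M yh
              split
              · rfl
              · rw [mul_zero]
            simp_rw [hpull, ENNReal.tsum_mul_left]
            rw [T0_eval lam q κ G hlam hq0 hG.1 hκ y]
          · -- weighted parts
            rw [show (∑' (M : Fin m → Fin m → ℕ) (yh : Fin m → ℕ),
                ∑ k₀, (if (fun k => (∑ i, M i k) + yh k) = y then
                  ((M i₀ k₀ : ℕ) : ℝ≥0∞) *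
                    ((∏ i, ∏ k, EP (q i * lam i * G i k) (M i k)) * ∏ k, EP (κ k) (yh k)) else 0))
              = ∑ k₀, ∑' (M : Fin m → Fin m → ℕ) (yh : Fin m → ℕ),
                  (if (fun k => (∑ i, M i k) + yh k) = y then
                    ((M i₀ k₀ : ℕ) : ℝ≥0∞) *
                      ((∏ i, ∏ k, EP (q i * lam i * G i k) (M i k)) * ∏ k, EP (κ k) (yh k)) else 0) from by
              rw [← Summable.tsum_finsetSum (fun k₀ _ => ENNReal.summable)]
              exact tsum_congr fun M => Summable.tsum_finsetSum (fun k₀ _ => ENNReal.summable)]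
            exact Finset.sum_congr rfl fun k₀ _ =>
              T1_eval lam q κ G hlam hq0 hG.1 hκ y i₀ k₀

end S3

/-- In the observation model of Lemma 2 (`x ∼ Pois(λ)`, binomial detection
with probabilities `q`, multinomial reporting with row-stochastic `G`, additive Poisson
clutter `ŷ ∼ Pois(κ)`, `y = (1ᵀM)ᵀ + ŷ`), the conditional expectation of `x` given `y`
satisfies `E[x | y] = [1 − q + ({yᵀ ⊘ [(q∘λ)ᵀG + κᵀ]}[(1⊗q)∘Gᵀ])ᵀ] ∘ λ`, where a ratio with
zero denominator is set to `0` (in Lean, division by zero is zero).  The conditional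
expectation is expressed as the ratio of the joint expectation to the marginal mass of `y`,
assumed positive. -/
theorem statement_3 {m : ℕ} (lam q κ : Fin m → ℝ) (G : Fin m → Fin m → ℝ)
    (hlam : ∀ i, 0 ≤ lam i) (hq0 : ∀ i, 0 ≤ q i) (hq1 : ∀ i, q i ≤ 1)
    (hκ : ∀ i, 0 ≤ κ i) (hG : PAL.IsStochastic G)
    (joint : (Fin m → ℕ) → (Fin m → ℕ) → (Fin m → Fin m → ℕ) → (Fin m → ℕ) → ℝ)
    (hjoint : ∀ x yb M yh, joint x yb M yh =
      (∏ i, PAL.poisP (lam i) (x i)) * (∏ i, PAL.binomP (x i) (q i) (yb i)) *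
        (∏ i, PAL.multinomP (yb i) (G i) (M i)) * ∏ k, PAL.poisP (κ k) (yh k))
    (y : Fin m → ℕ)
    (hpos : 0 < ∑' x : Fin m → ℕ, ∑' yb : Fin m → ℕ, ∑' M : Fin m → Fin m → ℕ,
        ∑' yh : Fin m → ℕ,
          (if (fun k => (∑ i, M i k) + yh k) = y then joint x yb M yh else 0)) :
    ∀ i : Fin m,
      (∑' x : Fin m → ℕ, ∑' yb : Fin m → ℕ, ∑' M : Fin m → Fin m → ℕ, ∑' yh : Fin m → ℕ,
          (if (fun k => (∑ i, M i k) + yh k) = y then (x i : ℝ) * joint x yb M yh else 0)) /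
        (∑' x : Fin m → ℕ, ∑' yb : Fin m → ℕ, ∑' M : Fin m → Fin m → ℕ, ∑' yh : Fin m → ℕ,
          (if (fun k => (∑ i, M i k) + yh k) = y then joint x yb M yh else 0))
      = (1 - q i +
          ∑ k, (y k : ℝ) * (q i * G i k) / ((∑ l, q l * lam l * G l k) + κ k)) * lam i := by
  intro i₀
  have hjnn : ∀ x yb M yh, 0 ≤ joint x yb M yh := by
    intro x yb M yh
    rw [hjoint]
    have n1 : (0:ℝ) ≤ ∏ i, PAL.poisP (lam i) (x i) :=
      Finset.prod_nonneg fun i _ => S3.poisP_nonneg (hlam i) _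
    have n2 : (0:ℝ) ≤ ∏ i, PAL.binomP (x i) (q i) (yb i) :=
      Finset.prod_nonneg fun i _ => S3.binomP_nonneg (hq0 i) (hq1 i) _ _
    have n3 : (0:ℝ) ≤ ∏ i, PAL.multinomP (yb i) (G i) (M i) :=
      Finset.prod_nonneg fun i _ => S3.multinomP_nonneg (fun j => hG.1 i j) _ _
    have n4 : (0:ℝ) ≤ ∏ k, PAL.poisP (κ k) (yh k) :=
      Finset.prod_nonneg fun k _ => S3.poisP_nonneg (hκ k) _
    exact mul_nonneg (mul_nonneg (mul_nonneg n1 n2) n3) n4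
  have hv1 : ∀ x yb M yh, (∃ i, x i < yb i) → joint x yb M yh = 0 := by
    intro x yb M yh h
    obtain ⟨i, hi⟩ := h
    rw [hjoint, Finset.prod_eq_zero (f := fun i => PAL.binomP (x i) (q i) (yb i))
      (Finset.mem_univ i) (S3.binomP_eq_zero hi)]
    ring
  have hv2 : ∀ x yb M yh, (∃ i, (∑ k, M i k) ≠ yb i) → joint x yb M yh = 0 := by
    intro x yb M yh h
    obtain ⟨i, hi⟩ := h
    rw [hjoint, Finset.prod_eq_zero (f := fun i => PAL.multinomP (yb i) (G i) (M i))
      (Finset.mem_univ i) (S3.multinomP_eq_zero hi)]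
    ring
  have hb0 := S3.bridge joint hjnn hv1 hv2 y (fun _ => (1:ℝ)) (fun _ => zero_le_one)
  simp only [one_mul] at hb0
  have hb1 := S3.bridge joint hjnn hv1 hv2 y (fun x => ((x i₀ : ℕ) : ℝ))
    (fun x => Nat.cast_nonneg _)
  rw [S3.T0_full lam q κ G hlam hq0 hq1 hG hκ joint hjoint y] at hb0
  rw [S3.T1_full lam q κ G hlam hq0 hq1 hG hκ joint hjoint y i₀] at hb1
  set μ : Fin m → ℝ := fun k => (∑ l, q l * lam l * G l k) + κ k with hμdef
  have hμnn : ∀ k, 0 ≤ μ k := fun k =>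
    add_nonneg (Finset.sum_nonneg fun l _ =>
      mul_nonneg (mul_nonneg (hq0 l) (hlam l)) (hG.1 l k)) (hκ k)
  have tD : (∏ k, S3.EP (μ k) (y k)).toReal = ∏ k, PAL.poisP (μ k) (y k) := by
    rw [ENNReal.toReal_prod]
    exact Finset.prod_congr rfl fun k _ => ENNReal.toReal_ofReal (S3.poisP_nonneg (hμnn k) _)
  rw [hb0, tD] at hpos
  have hDk : ∀ k, 0 < PAL.poisP (μ k) (y k) := by
    intro k
    rcases (S3.poisP_nonneg (hμnn k) (y k)).lt_or_eq with h | h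
    · exact h
    · exfalso
      have hz : ∏ k, PAL.poisP (μ k) (y k) = 0 :=
        Finset.prod_eq_zero (Finset.mem_univ k) h.symm
      rw [hz] at hpos
      exact lt_irrefl 0 hpos
  have hc₀ : (0:ℝ) ≤ (1 - q i₀) * lam i₀ := mul_nonneg (by linarith [hq1 i₀]) (hlam i₀)
  set WR : Fin m → ℝ := fun k =>
    if y k = 0 then 0 else q i₀ * lam i₀ * G i₀ k * PAL.poisP (μ k) (y k - 1) with hWRdef
  have tN : (ENNReal.ofReal ((1 - q i₀) * lam i₀) * ∏ k, S3.EP (μ k) (y k)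
      + ∑ k₀, ∏ k, (if k = k₀ then
          (if y k = 0 then 0 else ENNReal.ofReal (q i₀ * lam i₀ * G i₀ k) *
            S3.EP (μ k) (y k - 1))
          else S3.EP (μ k) (y k))).toReal
      = (1 - q i₀) * lam i₀ * ∏ k, PAL.poisP (μ k) (y k)
        + ∑ k₀, ∏ k, (if k = k₀ then WR k else PAL.poisP (μ k) (y k)) := by
    have hWne : ∀ k k₀ : Fin m, (if k = k₀ then
        (if y k = 0 then 0 else ENNReal.ofReal (q i₀ * lam i₀ * G i₀ k) *
          S3.EP (μ k) (y k - 1))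
        else S3.EP (μ k) (y k)) ≠ ⊤ := by
      intro k k₀
      split
      · split
        · exact ENNReal.zero_ne_top
        · exact ENNReal.mul_ne_top ENNReal.ofReal_ne_top (S3.EP_ne_top _ _)
      · exact S3.EP_ne_top _ _
    rw [ENNReal.toReal_add
      (ENNReal.mul_ne_top ENNReal.ofReal_ne_top
        (ENNReal.prod_lt_top (fun k _ => (S3.EP_ne_top _ _).lt_top)).ne)
      ((ENNReal.sum_lt_top.mpr fun k₀ _ =>
        (ENNReal.prod_lt_top fun k _ => (hWne k k₀).lt_top)).ne),
      ENNReal.toReal_mul, ENNReal.toReal_ofReal hc₀, tD,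
      ENNReal.toReal_sum (fun k₀ _ =>
        (ENNReal.prod_lt_top fun k _ => (hWne k k₀).lt_top).ne)]
    congr 1
    refine Finset.sum_congr rfl fun k₀ _ => ?_
    rw [ENNReal.toReal_prod]
    refine Finset.prod_congr rfl fun k _ => ?_
    split_ifs with hkk hy0
    · simp only [hWRdef]
      rw [if_pos hy0]
      exact ENNReal.toReal_zero
    · simp only [hWRdef]
      rw [if_neg hy0, ENNReal.toReal_mul, S3.EP_def,
        ENNReal.toReal_ofReal (mul_nonneg (mul_nonneg (hq0 i₀) (hlam i₀)) (hG.1 i₀ k)),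
        ENNReal.toReal_ofReal (S3.poisP_nonneg (hμnn k) _)]
    · rw [S3.EP_def]
      exact ENNReal.toReal_ofReal (S3.poisP_nonneg (hμnn k) _)
  rw [hb1, tN, hb0, tD]
  have hPk : ∀ k₀, (∏ k, (if k = k₀ then WR k else PAL.poisP (μ k) (y k)))
      = WR k₀ / PAL.poisP (μ k₀) (y k₀) * ∏ k, PAL.poisP (μ k) (y k) := by
    intro k₀
    rw [← Finset.mul_prod_erase Finset.univ
        (fun k => if k = k₀ then WR k else PAL.poisP (μ k) (y k)) (Finset.mem_univ k₀),
      if_pos rfl,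
      Finset.prod_congr rfl (fun k hk => if_neg (Finset.ne_of_mem_erase hk)),
      ← Finset.mul_prod_erase Finset.univ (fun k => PAL.poisP (μ k) (y k)) (Finset.mem_univ k₀)]
    field_simp [(hDk k₀).ne']
  rw [Finset.sum_congr rfl (fun k₀ _ => hPk k₀), ← Finset.sum_mul, ← add_mul,
    mul_div_assoc, div_self hpos.ne', mul_one]
  have hterm : ∀ k, WR k / PAL.poisP (μ k) (y k)
      = (y k : ℝ) * (q i₀ * G i₀ k) / μ k * lam i₀ := by
    intro k
    rw [hWRdef]
    simp only []
    cases hyk : y k with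
    | zero =>
        rw [if_pos rfl, zero_div]
        simp
    | succ n =>
        rw [if_neg (Nat.succ_ne_zero n)]
        have hμk : 0 < μ k := by
          rcases (hμnn k).lt_or_eq with h | h
          · exact h
          · exfalso
            have hz : PAL.poisP (μ k) (y k) = 0 := by
              rw [← h, hyk]
              unfold PAL.poisP
              simp [zero_pow (Nat.succ_ne_zero n)]
            exact (hDk k).ne' hz
        have hps := S3.pois_succ (μ k) n
        have hD1 : PAL.poisP (μ k) (n + 1) ≠ 0 := by
          rw [← hyk]; exact (hDk k).ne'
        simp only [Nat.succ_sub_one]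
        push_cast at hps ⊢
        field_simp
        linear_combination (-(q i₀ * G i₀ k * lam i₀)) * hps
  rw [Finset.sum_congr rfl (fun k _ => hterm k), add_mul, Finset.sum_mul]

end
end

section
/- Let λ ∈ ℝ_{≥0}^m and let λ_n ∈ ℝ_{≥0}^m satisfy ‖n^{-1} λ_n − λ‖_∞ < c n^{−(1/4+γ)} for all n, for constants c > 0 and γ > 0, and let x_n ∼ Pois(λ_n). Then for every f ∈ ℝ^m there exist constants b > 0 and γ̄ > 0 such that E[|n^{-1} x_n^T f − λ^T f|^4]^{1/4} ≤ b n^{−(1/4+γ̄)} for all n. -/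
open scoped BigOperators Classical
open MeasureTheory Filter

noncomputable section

open scoped ENNReal

namespace S8Aux

open scoped BigOperators ENNReal

lemma hasSum_poisP (μ : ℝ) : HasSum (PAL.poisP μ) 1 := by
  unfold PAL.poisP
  apply (hasSum_mul_left_iff (Real.exp_ne_zero μ)).mp
  simp only [mul_one]
  have : (fun i ↦ Real.exp μ * (Real.exp (-μ) * μ ^ i / (Nat.factorial i))) =
      fun i ↦ μ ^ i / (Nat.factorial i) := by
    ext n
    rw [mul_div_assoc, Real.exp_neg, ← mul_assoc, ← div_eq_mul_inv,
      div_self (Real.exp_ne_zero μ), one_mul]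
  rw [this, Real.exp_eq_exp_ℝ]
  exact NormedSpace.expSeries_div_hasSum_exp μ

lemma poisP_nonneg {μ : ℝ} (hμ : 0 ≤ μ) (k : ℕ) : 0 ≤ PAL.poisP μ k := by
  unfold PAL.poisP; positivity

lemma fact_cast (r k : ℕ) :
    ((k + r).factorial : ℝ) = (k.factorial : ℝ) * ∏ j ∈ Finset.range r, ((k : ℝ) + r - j) := by
  induction r with
  | zero => simp
  | succ r ih =>
    rw [show k + (r+1) = (k+r)+1 by ring, Nat.factorial_succ, Finset.prod_range_succ']
    push_cast
    rw [ih]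
    have : ∀ j ∈ Finset.range r, ((k:ℝ) + (r+1) - (j+1)) = (k:ℝ) + r - j := by
      intro j _; ring
    rw [Finset.prod_congr rfl this]
    ring

lemma hasSum_poisP_desc (μ : ℝ) (r : ℕ) :
    HasSum (fun k => PAL.poisP μ k * ∏ j ∈ Finset.range r, ((k : ℝ) - j)) (μ ^ r) := by
  have hshift : HasSum
      (fun k => PAL.poisP μ (k + r) * ∏ j ∈ Finset.range r, (((k + r : ℕ) : ℝ) - j))
      (μ ^ r) := by
    have h1 : (fun k => PAL.poisP μ (k + r) * ∏ j ∈ Finset.range r, (((k + r : ℕ) : ℝ) - j)) =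
        fun k => μ ^ r * PAL.poisP μ k := by
      funext k
      have hprod : ∀ j ∈ Finset.range r, (((k + r : ℕ) : ℝ) - j) = ((k : ℝ) + r - j) := by
        intro j _; push_cast; ring
      rw [Finset.prod_congr rfl hprod]
      unfold PAL.poisP
      rw [fact_cast r k]
      have hne : (∏ j ∈ Finset.range r, ((k : ℝ) + r - j)) ≠ 0 := by
        apply Finset.prod_ne_zero_iff.mpr
        intro j hj
        have : (j : ℝ) < r := by exact_mod_cast Finset.mem_range.mp hj
        have : 0 < (k : ℝ) + r - j := by linarith [Nat.cast_nonneg (α := ℝ) k]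
        linarith
      have hfk : (k.factorial : ℝ) ≠ 0 := by exact_mod_cast k.factorial_ne_zero
      field_simp
      ring
    rw [h1]
    simpa using (hasSum_poisP μ).mul_left (μ ^ r)
  have H := (hasSum_nat_add_iff
    (f := fun k => PAL.poisP μ k * ∏ j ∈ Finset.range r, ((k : ℝ) - j)) r).mp hshift
  have hzero : ∑ i ∈ Finset.range r, (PAL.poisP μ i * ∏ j ∈ Finset.range r, ((i : ℝ) - j)) = 0 := by
    apply Finset.sum_eq_zero
    intro i hi
    have : (∏ j ∈ Finset.range r, ((i : ℝ) - j)) = 0 :=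
      Finset.prod_eq_zero hi (by simp)
    rw [this, mul_zero]
  rw [hzero, add_zero] at H
  exact H

lemma hasSum_central4 (μ : ℝ) :
    HasSum (fun k => PAL.poisP μ k * ((k : ℝ) - μ) ^ 4) (μ + 3 * μ ^ 2) := by
  have H := ((((hasSum_poisP_desc μ 4).add
      ((hasSum_poisP_desc μ 3).mul_left (6 - 4*μ))).add
      ((hasSum_poisP_desc μ 2).mul_left (7 - 12*μ + 6*μ^2))).add
      ((hasSum_poisP_desc μ 1).mul_left (1 - 4*μ + 6*μ^2 - 4*μ^3))).add
      ((hasSum_poisP μ).mul_left (μ^4))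
  have hfun : (fun k => PAL.poisP μ k * ((k : ℝ) - μ) ^ 4) =
      (fun k => (PAL.poisP μ k * ∏ j ∈ Finset.range 4, ((k : ℝ) - j) +
        (6 - 4*μ) * (PAL.poisP μ k * ∏ j ∈ Finset.range 3, ((k : ℝ) - j)) +
        (7 - 12*μ + 6*μ^2) * (PAL.poisP μ k * ∏ j ∈ Finset.range 2, ((k : ℝ) - j)) +
        (1 - 4*μ + 6*μ^2 - 4*μ^3) * (PAL.poisP μ k * ∏ j ∈ Finset.range 1, ((k : ℝ) - j)) +
        μ^4 * PAL.poisP μ k)) := by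
    funext k
    simp only [Finset.prod_range_succ, Finset.prod_range_zero, one_mul]
    push_cast
    ring
  have hval : μ + 3 * μ ^ 2 =
      μ ^ 4 + (6 - 4*μ) * μ ^ 3 + (7 - 12*μ + 6*μ^2) * μ ^ 2 +
        (1 - 4*μ + 6*μ^2 - 4*μ^3) * μ ^ 1 + μ^4 * 1 := by ring
  rw [hfun, hval]
  exact H

lemma pow4_add_le (a b : ℝ) : (a + b) ^ 4 ≤ 8 * a ^ 4 + 8 * b ^ 4 := by
  nlinarith [sq_nonneg (a - b), sq_nonneg (a + b), sq_nonneg (a^2 - b^2), sq_nonneg (a^2 + b^2),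
    sq_nonneg a, sq_nonneg b, sq_nonneg (a*b)]

lemma single_bound (μ lami : ℝ) (hμ : 0 ≤ μ) (n : ℕ) (hn : 1 ≤ n) :
    ∑' k : ℕ, ENNReal.ofReal (((k : ℝ) / n - lami) ^ 4 * PAL.poisP μ k)
      ≤ ENNReal.ofReal (8 * (μ + 3 * μ ^ 2) / (n : ℝ) ^ 4 + 8 * (μ / n - lami) ^ 4) := by
  have hn0 : (0:ℝ) < (n:ℝ) := by exact_mod_cast hn
  set g : ℕ → ℝ := fun k =>
    8 / (n:ℝ)^4 * (PAL.poisP μ k * ((k : ℝ) - μ) ^ 4) + 8 * (μ / n - lami) ^ 4 * PAL.poisP μ k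
    with hg
  have hgsum : HasSum g (8 / (n:ℝ)^4 * (μ + 3 * μ ^ 2) + 8 * (μ / n - lami) ^ 4 * 1) :=
    ((hasSum_central4 μ).mul_left _).add ((hasSum_poisP μ).mul_left _)
  have hptwise : ∀ k : ℕ, ((k : ℝ) / n - lami) ^ 4 * PAL.poisP μ k ≤ g k := by
    intro k
    have h1 : ((k : ℝ) / n - lami) ^ 4 ≤ 8 / (n:ℝ)^4 * ((k : ℝ) - μ) ^ 4
        + 8 * (μ / n - lami) ^ 4 := by
      have h := pow4_add_le (((k : ℝ) - μ) / n) (μ / n - lami)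
      have heq : ((k : ℝ) - μ) / n + (μ / n - lami) = (k : ℝ) / n - lami := by ring
      rw [heq] at h
      calc ((k : ℝ) / n - lami) ^ 4 ≤ 8 * (((k:ℝ) - μ)/n) ^ 4 + 8 * (μ / n - lami) ^ 4 := h
        _ = 8 / (n:ℝ)^4 * ((k : ℝ) - μ) ^ 4 + 8 * (μ / n - lami) ^ 4 := by
          field_simp
    have h2 := mul_le_mul_of_nonneg_right h1 (poisP_nonneg hμ k)
    calc ((k : ℝ) / n - lami) ^ 4 * PAL.poisP μ k
        ≤ (8 / (n:ℝ)^4 * ((k : ℝ) - μ) ^ 4 + 8 * (μ / n - lami) ^ 4) * PAL.poisP μ k := h2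
      _ = g k := by rw [hg]; ring
  calc ∑' k : ℕ, ENNReal.ofReal (((k : ℝ) / n - lami) ^ 4 * PAL.poisP μ k)
      ≤ ∑' k : ℕ, ENNReal.ofReal (g k) :=
        ENNReal.tsum_le_tsum fun k => ENNReal.ofReal_le_ofReal (hptwise k)
    _ = ENNReal.ofReal (∑' k, g k) := by
        rw [ENNReal.ofReal_tsum_of_nonneg (fun k => ?_) hgsum.summable]
        have h0 : 0 ≤ ((k : ℝ)/n - lami) ^ 4 * PAL.poisP μ k := by
          have := poisP_nonneg hμ k; positivity
        exact le_trans h0 (hptwise k)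
    _ ≤ ENNReal.ofReal (8 * (μ + 3 * μ ^ 2) / (n : ℝ) ^ 4 + 8 * (μ / n - lami) ^ 4) := by
        rw [hgsum.tsum_eq]
        apply ENNReal.ofReal_le_ofReal
        apply le_of_eq; ring

lemma tsum_pi_prod : ∀ {m : ℕ} (p : Fin m → ℕ → ℝ≥0∞),
    ∑' x : Fin m → ℕ, ∏ j, p j (x j) = ∏ j, ∑' k, p j k := by
  intro m
  induction m with
  | zero =>
    intro p
    simp only [Finset.univ_eq_empty, Finset.prod_empty]
    haveI : Unique (Fin 0 → ℕ) := ⟨⟨fun i => i.elim0⟩, fun a => funext fun i => i.elim0⟩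
    rw [tsum_eq_single default (fun b hb => absurd (Subsingleton.elim b default) hb)]
  | succ m ih =>
    intro p
    rw [← (Fin.consEquiv (fun _ => ℕ)).tsum_eq]
    have : ∀ q : ℕ × (Fin m → ℕ), ∏ j, p j ((Fin.consEquiv (fun _ => ℕ)) q j) =
        p 0 q.1 * ∏ j : Fin m, p j.succ (q.2 j) := by
      intro q
      rw [Fin.prod_univ_succ]
      simp [Fin.consEquiv]
    simp only [this]
    rw [ENNReal.tsum_prod']
    simp only [ENNReal.tsum_mul_left]
    rw [ih (fun j => p j.succ), ENNReal.tsum_mul_right, Fin.prod_univ_succ]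

lemma tsum_pi_marginal {m : ℕ} (p : Fin m → ℕ → ℝ≥0∞) (hp : ∀ j, ∑' k, p j k = 1)
    (i : Fin m) (h : ℕ → ℝ≥0∞) :
    ∑' x : Fin m → ℕ, h (x i) * ∏ j, p j (x j) = ∑' k, h k * p i k := by
  set q : Fin m → ℕ → ℝ≥0∞ := fun j => if j = i then fun k => h k * p i k else p j with hq
  have h1 : ∀ x : Fin m → ℕ, h (x i) * ∏ j, p j (x j) = ∏ j, q j (x j) := by
    intro x
    rw [← Finset.mul_prod_erase Finset.univ (fun j => q j (x j)) (Finset.mem_univ i),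
      ← Finset.mul_prod_erase Finset.univ (fun j => p j (x j)) (Finset.mem_univ i)]
    have : ∏ j ∈ Finset.univ.erase i, q j (x j) = ∏ j ∈ Finset.univ.erase i, p j (x j) := by
      apply Finset.prod_congr rfl
      intro j hj
      simp [hq, (Finset.mem_erase.mp hj).1]
    rw [this]
    simp only [hq, if_pos rfl]
    ring
  simp only [h1]
  rw [tsum_pi_prod q]
  rw [← Finset.mul_prod_erase Finset.univ (fun j => ∑' k, q j k) (Finset.mem_univ i)]
  have h2 : ∏ j ∈ Finset.univ.erase i, (∑' k, q j k) = 1 := by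
    apply Finset.prod_eq_one
    intro j hj
    rw [hq]; simp only [if_neg (Finset.mem_erase.mp hj).1]
    exact hp j
  rw [h2, mul_one, hq]
  simp

lemma sum_pow_four_le {m : ℕ} (a : Fin m → ℝ) (ha : ∀ i, 0 ≤ a i) :
    (∑ i, a i) ^ 4 ≤ (m:ℝ)^3 * ∑ i, a i ^ 4 := by
  rcases Nat.eq_zero_or_pos m with hm | hm
  · subst hm; simp
  · have hcard : (Finset.univ : Finset (Fin m)).card = m := by simp
    have h := pow_sum_div_card_le_sum_pow (s := Finset.univ) (f := a)
      (fun i _ => ha i) 3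
    rw [hcard] at h
    norm_num at h
    have hm0 : (0:ℝ) < (m:ℝ)^3 := by positivity
    calc (∑ i, a i)^4 = ((∑ i, a i)^4 / (m:ℝ)^3) * (m:ℝ)^3 := by field_simp
      _ ≤ (∑ i, a i^4) * (m:ℝ)^3 := mul_le_mul_of_nonneg_right h hm0.le
      _ = (m:ℝ)^3 * ∑ i, a i^4 := mul_comm _ _

end S8Aux

/-- (Corollary to Lemma 7.)  Let `λ, λ_n ∈ ℝ₊ᵐ` with
`‖n⁻¹λ_n − λ‖_∞ < c n^{−(1/4+γ)}` for all `n ≥ 1`, and let `x_n ∼ Pois(λ_n)` (independent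
Poisson components).  Then for every `f ∈ ℝᵐ` there exist `b > 0` and `γ̄ > 0` with
`E[|n⁻¹ x_nᵀ f − λᵀ f|⁴]^{1/4} ≤ b n^{−(1/4+γ̄)}` for all `n ≥ 1`. -/
theorem statement_8 {m : ℕ} (lam : Fin m → ℝ) (lamn : ℕ → Fin m → ℝ) (c γ : ℝ)
    (hc : 0 < c) (hγ : 0 < γ)
    (hlam : ∀ i, 0 ≤ lam i) (hlamn : ∀ n i, 0 ≤ lamn n i)
    (hconv : ∀ n : ℕ, 1 ≤ n → ∀ i,
      |lamn n i / (n : ℝ) - lam i| < c * (n : ℝ) ^ (-(1 / 4 + γ) : ℝ)) :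
    ∀ f : Fin m → ℝ, ∃ b > (0 : ℝ), ∃ γb > (0 : ℝ), ∀ n : ℕ, 1 ≤ n →
      (∑' x : Fin m → ℕ,
          ENNReal.ofReal
            (|(∑ i, (x i : ℝ) * f i) / (n : ℝ) - ∑ i, lam i * f i| ^ 4 *
              ∏ i, PAL.poisP (lamn n i) (x i))) ^ ((1 : ℝ) / 4)
        ≤ ENNReal.ofReal (b * (n : ℝ) ^ (-(1 / 4 + γb) : ℝ)) := by
  intro f
  set γ' : ℝ := min γ (1/4) with hγ'def
  have hγ'pos : 0 < γ' := lt_min hγ (by norm_num)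
  have hγ'le : γ' ≤ 1/4 := min_le_right _ _
  have hγ'γ : γ' ≤ γ := min_le_left _ _
  set L : Fin m → ℝ := fun i => lam i + c with hLdef
  have hL : ∀ i, 0 ≤ L i := fun i => by
    have := hlam i; simp only [hLdef]; linarith
  set C : Fin m → ℝ := fun i => (m:ℝ)^3 * f i ^ 4 * (8 * (L i + 3 * L i ^ 2) + 8 * c ^ 4)
    with hCdef
  have hC : ∀ i, 0 ≤ C i := fun i => by
    have := hL i; simp only [hCdef]; positivity
  set K : ℝ := ∑ i, C i with hKdef
  have hK : 0 ≤ K := Finset.sum_nonneg fun i _ => hC i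
  refine ⟨(K + 1) ^ ((1:ℝ)/4), Real.rpow_pos_of_pos (by linarith) _, γ', hγ'pos, ?_⟩
  intro n hn
  have hN1 : (1:ℝ) ≤ (n:ℝ) := by exact_mod_cast hn
  have hN0 : (0:ℝ) < (n:ℝ) := by linarith
  set e : ℝ := -(1 + 4*γ') with hedef
  -- numeric per-coordinate bound
  have hnum : ∀ i, (m:ℝ)^3 * f i ^ 4 *
      (8 * (lamn n i + 3 * lamn n i ^ 2) / (n:ℝ)^4 + 8 * (lamn n i / n - lam i)^4)
      ≤ C i * (n:ℝ) ^ e := by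
    intro i
    have hμ0 : 0 ≤ lamn n i := hlamn n i
    have hδ : |lamn n i / n - lam i| < c * (n:ℝ) ^ (-(1/4+γ) : ℝ) := hconv n hn i
    have hr1 : (n:ℝ) ^ (-(1/4+γ) : ℝ) ≤ 1 :=
      Real.rpow_le_one_of_one_le_of_nonpos hN1 (by linarith)
    have hδc : lamn n i / n - lam i ≤ c := by
      have h1 : c * (n:ℝ) ^ (-(1/4+γ) : ℝ) ≤ c * 1 :=
        mul_le_mul_of_nonneg_left hr1 hc.le
      have := le_abs_self (lamn n i / n - lam i)
      linarith
    have hμL : lamn n i ≤ (n:ℝ) * L i := by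
      have h1 : lamn n i / n ≤ L i := by simp only [hLdef]; linarith
      calc lamn n i = (n:ℝ) * (lamn n i / n) := by field_simp
        _ ≤ (n:ℝ) * L i := mul_le_mul_of_nonneg_left h1 hN0.le
    have hLi := hL i
    -- central part
    have hrpow2 : (n:ℝ) ^ (-2 : ℝ) = ((n:ℝ)^2)⁻¹ := by
      rw [Real.rpow_neg hN0.le, show ((2:ℝ)) = ((2:ℕ):ℝ) by norm_num, Real.rpow_natCast]
    have h2 : 8 * (lamn n i + 3 * lamn n i ^ 2) / (n:ℝ)^4
        ≤ 8 * (L i + 3 * L i ^ 2) * (n:ℝ) ^ (-2 : ℝ) := by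
      rw [hrpow2]
      have hsum : lamn n i + 3 * lamn n i ^ 2 ≤ (n:ℝ)^2 * (L i + 3 * L i ^ 2) := by
        have hsq : lamn n i ^ 2 ≤ ((n:ℝ) * L i)^2 := pow_le_pow_left₀ hμ0 hμL 2
        nlinarith [hμL, hN1, hμ0]
      rw [div_le_iff₀ (by positivity)]
      have hn4 : (n:ℝ)^4 = (n:ℝ)^2 * (n:ℝ)^2 := by ring
      calc 8 * (lamn n i + 3 * lamn n i ^ 2) ≤ 8 * ((n:ℝ)^2 * (L i + 3 * L i ^ 2)) := by
            linarith
        _ = 8 * (L i + 3 * L i ^ 2) * ((n:ℝ)^2)⁻¹ * (n:ℝ)^4 := by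
            field_simp
    have h2' : (n:ℝ) ^ (-2 : ℝ) ≤ (n:ℝ) ^ e :=
      Real.rpow_le_rpow_of_exponent_le hN1 (by rw [hedef]; linarith)
    have h2'' : 8 * (lamn n i + 3 * lamn n i ^ 2) / (n:ℝ)^4
        ≤ 8 * (L i + 3 * L i ^ 2) * (n:ℝ) ^ e := by
      calc 8 * (lamn n i + 3 * lamn n i ^ 2) / (n:ℝ)^4
          ≤ 8 * (L i + 3 * L i ^ 2) * (n:ℝ) ^ (-2 : ℝ) := h2
        _ ≤ 8 * (L i + 3 * L i ^ 2) * (n:ℝ) ^ e :=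
            mul_le_mul_of_nonneg_left h2' (by positivity)
    -- bias part
    have h3 : 8 * (lamn n i / n - lam i)^4 ≤ 8 * c^4 * (n:ℝ) ^ e := by
      have habs : (lamn n i / n - lam i)^4 = |lamn n i / n - lam i|^4 := by
        rw [pow_abs, abs_of_nonneg (by positivity)]
      have h4 : |lamn n i / n - lam i|^4 ≤ (c * (n:ℝ) ^ (-(1/4+γ) : ℝ))^4 :=
        pow_le_pow_left₀ (abs_nonneg _) hδ.le 4
      have h5 : (c * (n:ℝ) ^ (-(1/4+γ) : ℝ))^4 = c^4 * (n:ℝ) ^ (-(1+4*γ) : ℝ) := by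
        rw [mul_pow, ← Real.rpow_natCast ((n:ℝ) ^ (-(1/4+γ) : ℝ)) 4,
          ← Real.rpow_mul hN0.le, show (-(1/4+γ) : ℝ) * ((4:ℕ):ℝ) = -(1+4*γ) by push_cast; ring]
      have h6 : (n:ℝ) ^ (-(1+4*γ) : ℝ) ≤ (n:ℝ) ^ e :=
        Real.rpow_le_rpow_of_exponent_le hN1 (by rw [hedef]; linarith)
      calc 8 * (lamn n i / n - lam i)^4 = 8 * |lamn n i / n - lam i|^4 := by rw [habs]
        _ ≤ 8 * (c^4 * (n:ℝ) ^ (-(1+4*γ) : ℝ)) := by rw [← h5]; linarith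
        _ ≤ 8 * (c^4 * (n:ℝ) ^ e) := by
            have := mul_le_mul_of_nonneg_left h6 (by positivity : (0:ℝ) ≤ c^4)
            linarith
        _ = 8 * c^4 * (n:ℝ) ^ e := by ring
    have hcoeff : (0:ℝ) ≤ (m:ℝ)^3 * f i ^ 4 := by positivity
    calc (m:ℝ)^3 * f i ^ 4 *
        (8 * (lamn n i + 3 * lamn n i ^ 2) / (n:ℝ)^4 + 8 * (lamn n i / n - lam i)^4)
        ≤ (m:ℝ)^3 * f i ^ 4 *
          (8 * (L i + 3 * L i ^ 2) * (n:ℝ) ^ e + 8 * c^4 * (n:ℝ) ^ e) :=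
          mul_le_mul_of_nonneg_left (add_le_add h2'' h3) hcoeff
      _ = C i * (n:ℝ) ^ e := by rw [hCdef]; ring
  -- per-coordinate tsum bound
  have hi : ∀ i : Fin m, (∑' x : Fin m → ℕ, ENNReal.ofReal ((m:ℝ)^3 * f i ^ 4 *
      (((x i : ℝ)/n - lam i)^4 * ∏ j, PAL.poisP (lamn n j) (x j))))
      ≤ ENNReal.ofReal (C i * (n:ℝ) ^ e) := by
    intro i
    have hco : (0:ℝ) ≤ (m:ℝ)^3 * f i ^ 4 := by positivity
    have hstep1 : ∀ x : Fin m → ℕ, ENNReal.ofReal ((m:ℝ)^3 * f i ^ 4 *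
        (((x i : ℝ)/n - lam i)^4 * ∏ j, PAL.poisP (lamn n j) (x j)))
        = ENNReal.ofReal ((m:ℝ)^3 * f i ^ 4 * ((x i : ℝ)/n - lam i)^4) *
          ∏ j, ENNReal.ofReal (PAL.poisP (lamn n j) (x j)) := by
      intro x
      rw [show (m:ℝ)^3 * f i ^ 4 * (((x i : ℝ)/n - lam i)^4 * ∏ j, PAL.poisP (lamn n j) (x j))
          = ((m:ℝ)^3 * f i ^ 4 * ((x i : ℝ)/n - lam i)^4) * ∏ j, PAL.poisP (lamn n j) (x j)
          by ring,
        ENNReal.ofReal_mul (by positivity),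
        ENNReal.ofReal_prod_of_nonneg (fun j _ => S8Aux.poisP_nonneg (hlamn n j) _)]
    have hp1 : ∀ j : Fin m, ∑' k, ENNReal.ofReal (PAL.poisP (lamn n j) k) = 1 := by
      intro j
      rw [← ENNReal.ofReal_tsum_of_nonneg (S8Aux.poisP_nonneg (hlamn n j))
        (S8Aux.hasSum_poisP (lamn n j)).summable,
        (S8Aux.hasSum_poisP (lamn n j)).tsum_eq, ENNReal.ofReal_one]
    calc (∑' x : Fin m → ℕ, ENNReal.ofReal ((m:ℝ)^3 * f i ^ 4 *
        (((x i : ℝ)/n - lam i)^4 * ∏ j, PAL.poisP (lamn n j) (x j))))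
        = ∑' k : ℕ, ENNReal.ofReal ((m:ℝ)^3 * f i ^ 4 * ((k : ℝ)/n - lam i)^4) *
            ENNReal.ofReal (PAL.poisP (lamn n i) k) := by
          simp only [hstep1]
          exact S8Aux.tsum_pi_marginal (fun j k => ENNReal.ofReal (PAL.poisP (lamn n j) k))
            hp1 i (fun k => ENNReal.ofReal ((m:ℝ)^3 * f i ^ 4 * ((k : ℝ)/n - lam i)^4))
      _ = ENNReal.ofReal ((m:ℝ)^3 * f i ^ 4) *
            ∑' k : ℕ, ENNReal.ofReal (((k : ℝ)/n - lam i)^4 * PAL.poisP (lamn n i) k) := by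
          rw [← ENNReal.tsum_mul_left]
          congr 1
          funext k
          rw [ENNReal.ofReal_mul hco, mul_assoc,
            ← ENNReal.ofReal_mul (by positivity : (0:ℝ) ≤ ((k : ℝ)/n - lam i)^4)]
      _ ≤ ENNReal.ofReal ((m:ℝ)^3 * f i ^ 4) *
            ENNReal.ofReal (8 * (lamn n i + 3 * lamn n i ^ 2) / (n:ℝ)^4
              + 8 * (lamn n i / n - lam i)^4) :=
          mul_le_mul_right (S8Aux.single_bound (lamn n i) (lam i) (hlamn n i) n hn) _
      _ = ENNReal.ofReal ((m:ℝ)^3 * f i ^ 4 * (8 * (lamn n i + 3 * lamn n i ^ 2) / (n:ℝ)^4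
              + 8 * (lamn n i / n - lam i)^4)) := by
          rw [← ENNReal.ofReal_mul hco]
      _ ≤ ENNReal.ofReal (C i * (n:ℝ) ^ e) := ENNReal.ofReal_le_ofReal (hnum i)
  -- pointwise bound
  have hpt : ∀ x : Fin m → ℕ,
      |(∑ i, (x i : ℝ) * f i) / (n : ℝ) - ∑ i, lam i * f i| ^ 4 *
        ∏ j, PAL.poisP (lamn n j) (x j)
      ≤ ∑ i, (m:ℝ)^3 * f i ^ 4 *
          (((x i : ℝ)/n - lam i)^4 * ∏ j, PAL.poisP (lamn n j) (x j)) := by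
    intro x
    have hP : 0 ≤ ∏ j, PAL.poisP (lamn n j) (x j) :=
      Finset.prod_nonneg fun j _ => S8Aux.poisP_nonneg (hlamn n j) _
    have h1 : (∑ i, (x i : ℝ) * f i) / (n : ℝ) - ∑ i, lam i * f i
        = ∑ i, ((x i : ℝ)/n - lam i) * f i := by
      rw [Finset.sum_div, ← Finset.sum_sub_distrib]
      exact Finset.sum_congr rfl fun i _ => by ring
    have h2 : |∑ i, ((x i : ℝ)/n - lam i) * f i| ≤ ∑ i, |(x i : ℝ)/n - lam i| * |f i| := by
      refine (Finset.abs_sum_le_sum_abs _ _).trans_eq ?_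
      exact Finset.sum_congr rfl fun i _ => abs_mul _ _
    have h3 : |(∑ i, (x i : ℝ) * f i) / (n : ℝ) - ∑ i, lam i * f i| ^ 4
        ≤ (∑ i, |(x i : ℝ)/n - lam i| * |f i|) ^ 4 := by
      rw [h1]
      exact pow_le_pow_left₀ (abs_nonneg _) h2 4
    have h4 : (∑ i, |(x i : ℝ)/n - lam i| * |f i|) ^ 4
        ≤ (m:ℝ)^3 * ∑ i, (|(x i : ℝ)/n - lam i| * |f i|) ^ 4 :=
      S8Aux.sum_pow_four_le _ (fun i => by positivity)
    have h5 : ∀ i, (|(x i : ℝ)/n - lam i| * |f i|) ^ 4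
        = ((x i : ℝ)/n - lam i)^4 * f i ^ 4 := by
      intro i
      rw [mul_pow, pow_abs, pow_abs, abs_of_nonneg (by positivity : (0:ℝ) ≤ ((x i : ℝ)/n - lam i)^4),
        abs_of_nonneg (by positivity : (0:ℝ) ≤ f i ^ 4)]
    have h6 : |(∑ i, (x i : ℝ) * f i) / (n : ℝ) - ∑ i, lam i * f i| ^ 4
        ≤ (m:ℝ)^3 * ∑ i, ((x i : ℝ)/n - lam i)^4 * f i ^ 4 := by
      refine (h3.trans h4).trans_eq ?_
      congr 1
      exact Finset.sum_congr rfl fun i _ => h5 i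
    calc |(∑ i, (x i : ℝ) * f i) / (n : ℝ) - ∑ i, lam i * f i| ^ 4 *
          ∏ j, PAL.poisP (lamn n j) (x j)
        ≤ ((m:ℝ)^3 * ∑ i, ((x i : ℝ)/n - lam i)^4 * f i ^ 4) *
          ∏ j, PAL.poisP (lamn n j) (x j) := mul_le_mul_of_nonneg_right h6 hP
      _ = ∑ i, (m:ℝ)^3 * f i ^ 4 *
          (((x i : ℝ)/n - lam i)^4 * ∏ j, PAL.poisP (lamn n j) (x j)) := by
          rw [Finset.mul_sum, Finset.sum_mul]
          exact Finset.sum_congr rfl fun i _ => by ring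
  -- main tsum bound
  have hT : (∑' x : Fin m → ℕ,
      ENNReal.ofReal
        (|(∑ i, (x i : ℝ) * f i) / (n : ℝ) - ∑ i, lam i * f i| ^ 4 *
          ∏ i, PAL.poisP (lamn n i) (x i)))
      ≤ ENNReal.ofReal ((K + 1) * (n:ℝ) ^ e) := by
    calc (∑' x : Fin m → ℕ,
        ENNReal.ofReal
          (|(∑ i, (x i : ℝ) * f i) / (n : ℝ) - ∑ i, lam i * f i| ^ 4 *
            ∏ i, PAL.poisP (lamn n i) (x i)))
        ≤ ∑' x : Fin m → ℕ, ENNReal.ofReal (∑ i, (m:ℝ)^3 * f i ^ 4 *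
            (((x i : ℝ)/n - lam i)^4 * ∏ j, PAL.poisP (lamn n j) (x j))) :=
          ENNReal.tsum_le_tsum fun x => ENNReal.ofReal_le_ofReal (hpt x)
      _ = ∑' x : Fin m → ℕ, ∑ i, ENNReal.ofReal ((m:ℝ)^3 * f i ^ 4 *
            (((x i : ℝ)/n - lam i)^4 * ∏ j, PAL.poisP (lamn n j) (x j))) := by
          congr 1
          funext x
          refine ENNReal.ofReal_sum_of_nonneg fun i _ => ?_
          have : 0 ≤ ∏ j, PAL.poisP (lamn n j) (x j) :=
            Finset.prod_nonneg fun j _ => S8Aux.poisP_nonneg (hlamn n j) _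
          positivity
      _ = ∑ i, ∑' x : Fin m → ℕ, ENNReal.ofReal ((m:ℝ)^3 * f i ^ 4 *
            (((x i : ℝ)/n - lam i)^4 * ∏ j, PAL.poisP (lamn n j) (x j))) :=
          Summable.tsum_finsetSum fun i _ => ENNReal.summable
      _ ≤ ∑ i, ENNReal.ofReal (C i * (n:ℝ) ^ e) := Finset.sum_le_sum fun i _ => hi i
      _ = ENNReal.ofReal (∑ i, C i * (n:ℝ) ^ e) := by
          rw [ENNReal.ofReal_sum_of_nonneg fun i _ => ?_]
          have : (0:ℝ) ≤ (n:ℝ) ^ e := Real.rpow_nonneg hN0.le e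
          exact mul_nonneg (hC i) this
      _ ≤ ENNReal.ofReal ((K + 1) * (n:ℝ) ^ e) := by
          apply ENNReal.ofReal_le_ofReal
          rw [← Finset.sum_mul, ← hKdef]
          have : (0:ℝ) ≤ (n:ℝ) ^ e := Real.rpow_nonneg hN0.le e
          nlinarith
  -- conclude with the fourth root
  calc (∑' x : Fin m → ℕ,
      ENNReal.ofReal
        (|(∑ i, (x i : ℝ) * f i) / (n : ℝ) - ∑ i, lam i * f i| ^ 4 *
          ∏ i, PAL.poisP (lamn n i) (x i))) ^ ((1:ℝ)/4)
      ≤ (ENNReal.ofReal ((K + 1) * (n:ℝ) ^ e)) ^ ((1:ℝ)/4) :=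
        ENNReal.rpow_le_rpow hT (by norm_num)
    _ = ENNReal.ofReal (((K + 1) * (n:ℝ) ^ e) ^ ((1:ℝ)/4)) :=
        ENNReal.ofReal_rpow_of_nonneg
          (mul_nonneg (by linarith) (Real.rpow_nonneg hN0.le e)) (by norm_num)
    _ = ENNReal.ofReal ((K + 1) ^ ((1:ℝ)/4) * (n:ℝ) ^ (-(1/4 + γ') : ℝ)) := by
        rw [Real.mul_rpow (by linarith) (Real.rpow_nonneg hN0.le e),
          ← Real.rpow_mul hN0.le, show e * ((1:ℝ)/4) = -(1/4 + γ') by rw [hedef]; ring]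

end
end
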